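/- arXiv:1810.08907 — 7 statements merged into one kernel-verified Lean document; each statement's English description precedes it below -/
import Mathlib

section
/- Let f : ℝⁿ → ℝ be convex with L-Lipschitz gradient, and let 0 < s ≤ 1/L. Then for all x, y ∈ ℝⁿ, f(x - s∇f(x)) ≤ f(y) + ⟨∇f(x), x - y⟩ - (s/2)‖∇f(x)‖² - (s/2)‖∇f(x) - ∇f(y)‖². -/
open scoped RealInnerProductSpace

variable {n : ℕ}

local notation "E" => EuclideanSpace ℝ (Fin n)

/-- derivative along a line -/
lemma nag_line_deriv (f : EuclideanSpace ℝ (Fin n) → ℝ)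
    (g : EuclideanSpace ℝ (Fin n) → EuclideanSpace ℝ (Fin n))
    (hgrad : ∀ x, HasGradientAt f (g x) x) (a v : E) (t : ℝ) :
    HasDerivAt (fun t : ℝ => f (a + t • v)) ⟪g (a + t • v), v⟫ t := by
  have hc : HasDerivAt (fun t : ℝ => a + t • v) v t := by
    simpa using ((hasDerivAt_id t).smul_const v).const_add a
  have h := ((hgrad (a + t • v)).hasFDerivAt).comp_hasDerivAt t hc
  simpa [InnerProductSpace.toDual_apply_apply, Function.comp_def] using h

/-- descent lemma / quadratic upper bound -/
lemma nag_descent (f : EuclideanSpace ℝ (Fin n) → ℝ)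
    (g : EuclideanSpace ℝ (Fin n) → EuclideanSpace ℝ (Fin n))
    (L : ℝ) (hL : 0 < L)
    (hgrad : ∀ x, HasGradientAt f (g x) x)
    (hlip : ∀ x y, ‖g x - g y‖ ≤ L * ‖x - y‖) (a b : E) :
    f b ≤ f a + ⟪g a, b - a⟫ + L / 2 * ‖b - a‖ ^ 2 := by
  set v := b - a with hv
  set H : ℝ → ℝ := fun t => f (a + t • v) - t * ⟪g a, v⟫ - L / 2 * ‖v‖ ^ 2 * t ^ 2 with hH
  have hH' : ∀ t : ℝ, HasDerivAt H (⟪g (a + t • v), v⟫ - ⟪g a, v⟫ - L / 2 * ‖v‖ ^ 2 * (2 * t)) t := by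
    intro t
    have h1 := nag_line_deriv f g hgrad a v t
    have h2 : HasDerivAt (fun t : ℝ => t * ⟪g a, v⟫) ⟪g a, v⟫ t := hasDerivAt_mul_const _
    have h3 : HasDerivAt (fun t : ℝ => L / 2 * ‖v‖ ^ 2 * t ^ 2) (L / 2 * ‖v‖ ^ 2 * (2 * t)) t := by
      simpa using (hasDerivAt_pow 2 t).const_mul (L / 2 * ‖v‖ ^ 2)
    exact (h1.sub h2).sub h3
  have hanti : AntitoneOn H (Set.Icc 0 1) := by
    apply antitoneOn_of_deriv_nonpos (convex_Icc 0 1)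
    · exact fun t _ => ((hH' t).continuousAt).continuousWithinAt
    · exact fun t _ => ((hH' t).differentiableAt).differentiableWithinAt
    · intro t ht
      rw [interior_Icc] at ht
      rw [(hH' t).deriv]
      have hin : ⟪g (a + t • v) - g a, v⟫ ≤ ‖g (a + t • v) - g a‖ * ‖v‖ := real_inner_le_norm _ _
      have hl : ‖g (a + t • v) - g a‖ ≤ L * (t * ‖v‖) := by
        have := hlip (a + t • v) a
        simpa [norm_smul, abs_of_pos ht.1] using this
      have hvn : (0:ℝ) ≤ ‖v‖ := norm_nonneg _
      have : ⟪g (a + t • v), v⟫ - ⟪g a, v⟫ ≤ L * t * ‖v‖ ^ 2 := by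
        rw [← inner_sub_left]
        nlinarith
      nlinarith
  have key := hanti (Set.left_mem_Icc.2 zero_le_one) (Set.right_mem_Icc.2 zero_le_one) zero_le_one
  have h0 : H 0 = f a := by simp [hH]
  have h1 : H 1 = f b - ⟪g a, v⟫ - L / 2 * ‖v‖ ^ 2 := by
    simp [hH, hv]
  rw [h0, h1] at key
  linarith

/-- gradient inequality for convex functions -/
lemma nag_grad_le (f : EuclideanSpace ℝ (Fin n) → ℝ)
    (g : EuclideanSpace ℝ (Fin n) → EuclideanSpace ℝ (Fin n))
    (hgrad : ∀ x, HasGradientAt f (g x) x)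
    (hconv : ConvexOn ℝ Set.univ f) (a b : E) :
    f a + ⟪g a, b - a⟫ ≤ f b := by
  set v := b - a with hv
  have hψ : ConvexOn ℝ Set.univ (fun t : ℝ => f (a + t • v)) := by
    have h := hconv.comp_affineMap (AffineMap.lineMap a b : ℝ →ᵃ[ℝ] E)
    simpa [Function.comp_def, AffineMap.lineMap_apply, hv, add_comm] using h
  have hd := nag_line_deriv f g hgrad a v 0
  have := hψ.le_slope_of_hasDerivAt (Set.mem_univ (0:ℝ)) (Set.mem_univ 1) one_pos (by simpa using hd)
  rw [slope_def_field] at this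
  simp only [zero_smul, add_zero, one_smul] at this
  have hb : a + v = b := by simp [hv]
  rw [hb] at this
  have : ⟪g a, v⟫ ≤ f b - f a := by
    simpa [div_eq_mul_inv] using this
  linarith

/-- cocoercivity -/
lemma nag_cocoercive (f : EuclideanSpace ℝ (Fin n) → ℝ)
    (g : EuclideanSpace ℝ (Fin n) → EuclideanSpace ℝ (Fin n))
    (L : ℝ) (hL : 0 < L)
    (hgrad : ∀ x, HasGradientAt f (g x) x)
    (hconv : ConvexOn ℝ Set.univ f)
    (hlip : ∀ x y, ‖g x - g y‖ ≤ L * ‖x - y‖) (x y : E) :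
    f x + ⟪g x, y - x⟫ + 1 / (2 * L) * ‖g x - g y‖ ^ 2 ≤ f y := by
  set F : E → ℝ := fun z => f z - ⟪g x, z⟫ with hF
  set G : E → E := fun z => g z - g x with hG
  have hgradF : ∀ z, HasGradientAt F (G z) z := by
    intro z
    have hlin : HasFDerivAt (fun z : E => ⟪g x, z⟫) (InnerProductSpace.toDual ℝ E (g x)) z :=
      (InnerProductSpace.toDual ℝ E (g x)).hasFDerivAt
    have h := (hgrad z).hasFDerivAt.sub hlin
    have heq : InnerProductSpace.toDual ℝ E (g z) - InnerProductSpace.toDual ℝ E (g x)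
        = InnerProductSpace.toDual ℝ E (G z) := by
      simp [hG, map_sub]
    rw [heq] at h
    exact (by simpa using h.hasGradientAt : HasGradientAt (f - fun z => ⟪g x, z⟫) (G z) z)
  have hlin : ConvexOn ℝ Set.univ (fun z : E => -⟪g x, z⟫) :=
    ⟨convex_univ, fun p _ q _ α β hα hβ hab =>
      le_of_eq (by simp [inner_add_right, inner_smul_right]; ring)⟩
  have hconvF : ConvexOn ℝ Set.univ F := by
    have h := hconv.add hlin
    have hFe : F = f + fun z => -⟪g x, z⟫ := by funext z; simp [hF, sub_eq_add_neg]
    rwa [hFe]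
  have hlipF : ∀ u w, ‖G u - G w‖ ≤ L * ‖u - w‖ := by
    intro u w
    have : G u - G w = g u - g w := by simp [hG]
    rw [this]; exact hlip u w
  have hGx : G x = 0 := by simp [hG]
  -- F x is a global minimum
  have hmin : ∀ b, F x ≤ F b := by
    intro b
    have := nag_grad_le F G hgradF hconvF x b
    simpa [hGx] using this
  -- descent lemma for F at y
  set b : E := y - (1 / L) • G y with hb
  have hdesc := nag_descent F G L hL hgradF hlipF y b
  have hby : b - y = -((1 / L) • G y) := by simp [hb]
  have hin : ⟪G y, b - y⟫ = -(1 / L * ‖G y‖ ^ 2) := by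
    rw [hby, inner_neg_right, real_inner_smul_right, real_inner_self_eq_norm_sq]
  have hnorm : ‖b - y‖ ^ 2 = (1 / L) ^ 2 * ‖G y‖ ^ 2 := by
    rw [hby, norm_neg, norm_smul]
    rw [Real.norm_eq_abs, abs_of_pos (by positivity : (0:ℝ) < 1 / L)]
    ring
  rw [hin, hnorm] at hdesc
  have hFb : F x ≤ F y - 1 / (2 * L) * ‖G y‖ ^ 2 := by
    have h2 : L / 2 * ((1 / L) ^ 2 * ‖G y‖ ^ 2) = 1 / (2 * L) * ‖G y‖ ^ 2 := by
      field_simp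
    calc F x ≤ F b := hmin b
    _ ≤ F y + -(1 / L * ‖G y‖ ^ 2) + L / 2 * ((1 / L) ^ 2 * ‖G y‖ ^ 2) := hdesc
    _ = F y - 1 / (2 * L) * ‖G y‖ ^ 2 := by
        rw [h2]; field_simp; ring
  have hGy : ‖G y‖ = ‖g x - g y‖ := by rw [hG]; exact norm_sub_rev _ _
  rw [hGy] at hFb
  simp only [hF] at hFb
  have hsplit : ⟪g x, y - x⟫ = ⟪g x, y⟫ - ⟪g x, x⟫ := inner_sub_right _ _ _
  linarith

/-- Tightened descent inequality for L-smooth convex functions. -/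
theorem nag_tight_descent {n : ℕ}
    (f : EuclideanSpace ℝ (Fin n) → ℝ)
    (g : EuclideanSpace ℝ (Fin n) → EuclideanSpace ℝ (Fin n))
    (L s : ℝ) (hL : 0 < L)
    (hgrad : ∀ x, HasGradientAt f (g x) x)
    (hconv : ConvexOn ℝ Set.univ f)
    (hlip : ∀ x y, ‖g x - g y‖ ≤ L * ‖x - y‖)
    (hs : 0 < s) (hsL : s ≤ 1 / L) :
    ∀ x y, f (x - s • g x) ≤ f y + ⟪g x, x - y⟫
      - s / 2 * ‖g x‖ ^ 2 - s / 2 * ‖g x - g y‖ ^ 2 := by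
  intro x y
  have h1 := nag_descent f g L hL hgrad hlip x (x - s • g x)
  have hxx : x - s • g x - x = -(s • g x) := by abel
  have hin : ⟪g x, x - s • g x - x⟫ = -(s * ‖g x‖ ^ 2) := by
    rw [hxx, inner_neg_right, real_inner_smul_right, real_inner_self_eq_norm_sq]
  have hnorm : ‖x - s • g x - x‖ ^ 2 = s ^ 2 * ‖g x‖ ^ 2 := by
    rw [hxx, norm_neg, norm_smul, Real.norm_eq_abs, abs_of_pos hs]
    ring
  rw [hin, hnorm] at h1
  have h2 := nag_cocoercive f g L hL hgrad hconv hlip x y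
  have hsL' : s * L ≤ 1 := by
    rw [div_eq_mul_inv, one_mul] at hsL
    calc s * L ≤ L⁻¹ * L := by nlinarith
    _ = 1 := inv_mul_cancel₀ hL.ne'
  have hxy : ⟪g x, x - y⟫ = -⟪g x, y - x⟫ := by
    rw [← inner_neg_right]; congr 1; abel
  have hcoerc : 1 / (2 * L) * ‖g x - g y‖ ^ 2 ≥ s / 2 * ‖g x - g y‖ ^ 2 := by
    have : s / 2 ≤ 1 / (2 * L) := by
      rw [div_le_div_iff₀ (by norm_num) (by positivity)]
      nlinarith
    nlinarith [sq_nonneg ‖g x - g y‖]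
  nlinarith [norm_nonneg (g x), sq_nonneg ‖g x‖]
end

section
/- Let f : ℝⁿ → ℝ be convex with L-Lipschitz gradient, with minimizer x⋆, and let 0 < s ≤ 1/(3L). Define the NAG-C iterates by x₀ = y₀, y_{k+1} = x_k - s∇f(x_k), x_{k+1} = y_{k+1} + (k/(k+3))(y_{k+1} - y_k). Then for all k ≥ 0, min_{0 ≤ i ≤ k} ‖∇f(x_i)‖² ≤ 8568·‖x₀ - x⋆‖²/(s²(k+1)³). -/
set_option maxHeartbeats 1000000
open Set
open scoped RealInnerProductSpace

section helpers
variable {F : Type*} [NormedAddCommGroup F] [InnerProductSpace ℝ F] [CompleteSpace F]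
variable {f : F → ℝ} {g : F → F} {L : ℝ}

lemma line_hasDerivAt (hgrad : ∀ x, HasGradientAt f (g x) x) (a v : F) (t : ℝ) :
    HasDerivAt (fun t : ℝ => f (a + t • v)) (⟪g (a + t • v), v⟫) t := by
  have hline : HasDerivAt (fun t : ℝ => a + t • v) v t := by
    simpa using ((hasDerivAt_id t).smul_const v).const_add a
  have := ((hgrad (a + t • v)).hasFDerivAt).comp_hasDerivAt t hline
  simp at this; exact this

lemma grad_convex_ineq (hconv : ConvexOn ℝ Set.univ f)
    (hgrad : ∀ x, HasGradientAt f (g x) x) (a b : F) :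
    f a + ⟪g a, b - a⟫ ≤ f b := by
  set v := b - a with hv
  have hφconv : ConvexOn ℝ Set.univ (fun t : ℝ => f (a + t • v)) := by
    refine ⟨convex_univ, fun t1 _ t2 _ α β hα hβ hαβ => ?_⟩
    have key : a + (α • t1 + β • t2) • v = α • (a + t1 • v) + β • (a + t2 • v) := by
      match_scalars <;> simp <;> linarith
    dsimp only
    rw [key]
    exact hconv.2 (mem_univ _) (mem_univ _) hα hβ hαβ
  have hd := line_hasDerivAt hgrad a v 0
  have hslope := hφconv.le_slope_of_hasDerivAt (mem_univ (0:ℝ)) (mem_univ (1:ℝ)) one_pos hd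
  simp only [slope_def_field, zero_smul, add_zero, one_smul] at hslope
  have h1 : a + v = b := by rw [hv]; abel
  rw [h1] at hslope
  simp only [div_one, sub_zero] at hslope
  linarith

lemma descent_lemma (hgrad : ∀ x, HasGradientAt f (g x) x)
    (hlip : ∀ a b, ‖g a - g b‖ ≤ L * ‖a - b‖) (a b : F) :
    f b ≤ f a + ⟪g a, b - a⟫ + L / 2 * ‖b - a‖ ^ 2 := by
  set v := b - a with hv
  set ψ : ℝ → ℝ := fun t => f (a + t • v) - t * ⟪g a, v⟫ - t ^ 2 * (L / 2 * ‖v‖ ^ 2) with hψ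
  have hψd : ∀ t : ℝ, HasDerivAt ψ (⟪g (a + t • v), v⟫ - ⟪g a, v⟫ - 2 * t * (L / 2 * ‖v‖ ^ 2)) t := by
    intro t
    have h1 := (line_hasDerivAt hgrad a v t).sub ((hasDerivAt_id t).mul_const (⟪g a, v⟫))
    have h2 := (hasDerivAt_pow 2 t).mul_const (L / 2 * ‖v‖ ^ 2)
    have h := h1.sub h2
    simp at h; exact h
  have hmono : AntitoneOn ψ (Icc 0 1) := by
    refine antitoneOn_of_deriv_nonpos (convex_Icc 0 1) ?_ ?_ ?_
    · exact (Differentiable.continuous (fun t => (hψd t).differentiableAt)).continuousOn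
    · exact fun t _ => ((hψd t).differentiableAt).differentiableWithinAt
    · intro t ht
      rw [interior_Icc] at ht
      rw [(hψd t).deriv]
      have hbound : ⟪g (a + t • v), v⟫ - ⟪g a, v⟫ ≤ t * (L * ‖v‖ ^ 2) := by
        rw [← inner_sub_left]
        have h1 := real_inner_le_norm (g (a + t • v) - g a) v
        have h2 := hlip (a + t • v) a
        have h3 : a + t • v - a = t • v := by abel
        rw [h3, norm_smul, Real.norm_eq_abs, abs_of_pos ht.1] at h2
        have hns : (0:ℝ) ≤ ‖v‖ := norm_nonneg v
        have h4 := mul_le_mul_of_nonneg_right h2 hns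
        nlinarith [norm_nonneg (g (a + t • v) - g a)]
      nlinarith [ht.1.le]
  have hm := hmono (left_mem_Icc.2 zero_le_one) (right_mem_Icc.2 zero_le_one) zero_le_one
  have h1 : a + v = b := by rw [hv]; abel
  simp only [hψ, zero_smul, add_zero, one_smul, h1, one_pow, one_mul, zero_mul,
    sub_zero, zero_pow, ne_eq, OfNat.ofNat_ne_zero, not_false_eq_true] at hm
  linarith

lemma cube_le_sum_sq : ∀ k : ℕ, ((k:ℝ)+1)^3/3 ≤ ∑ i ∈ Finset.range (k+1), ((i:ℝ)+2)^2 := by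
  intro k
  induction k with
  | zero => norm_num
  | succ k ih =>
    rw [Finset.sum_range_succ]
    push_cast
    push_cast at ih
    nlinarith [ih, Nat.cast_nonneg (α := ℝ) k]

end helpers

/-- NAG-C minimizes the squared gradient norm at an inverse cubic rate. -/
theorem nag_c_inverse_cubic_gradient_rate {n : ℕ}
    (f : EuclideanSpace ℝ (Fin n) → ℝ)
    (g : EuclideanSpace ℝ (Fin n) → EuclideanSpace ℝ (Fin n))
    (L s : ℝ) (hL : 0 < L)
    (hgrad : ∀ x, HasGradientAt f (g x) x)
    (hconv : ConvexOn ℝ Set.univ f)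
    (hlip : ∀ a b, ‖g a - g b‖ ≤ L * ‖a - b‖)
    (xstar : EuclideanSpace ℝ (Fin n)) (hmin : ∀ z, f xstar ≤ f z)
    (hs : 0 < s) (hsL : s ≤ 1 / (3 * L))
    (x y : ℕ → EuclideanSpace ℝ (Fin n)) (h0 : x 0 = y 0)
    (hy : ∀ k : ℕ, y (k + 1) = x k - s • g (x k))
    (hx : ∀ k : ℕ, x (k + 1) = y (k + 1) + ((k : ℝ) / ((k : ℝ) + 3)) • (y (k + 1) - y k)) :
    ∀ k : ℕ, ∃ i ≤ k,
      ‖g (x i)‖ ^ 2 ≤ 8568 * ‖x 0 - xstar‖ ^ 2 / (s ^ 2 * ((k : ℝ) + 1) ^ 3) := by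
  set z : ℕ → EuclideanSpace ℝ (Fin n) := fun k => x k + ((k:ℝ)/2) • (x k - y k) with hz
  have hLs : L * s ≤ 1/3 := by
    have h3L : (0:ℝ) < 3 * L := by positivity
    have := (le_div_iff₀ h3L).mp hsL
    linarith
  -- z recurrence
  have hzrec : ∀ k : ℕ, z (k+1) = z k - ((s * ((k:ℝ)+2))/2) • g (x k) := by
    intro k
    have h3 : ((k:ℝ) + 3) ≠ 0 := by positivity
    simp only [hz]
    push_cast
    rw [hx k, hy k]
    match_scalars <;> field_simp <;> ring
  -- one-step Lyapunov decrease
  have hstep : ∀ k : ℕ,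
      s * (((k:ℝ)+1)*((k:ℝ)+3)/2) * (f (y (k+1)) - f xstar) + ‖z (k+1) - xstar‖^2
        + s^2*((k:ℝ)+2)^2/6 * ‖g (x k)‖^2
      ≤ s * ((k:ℝ)*((k:ℝ)+2)/2) * (f (y k) - f xstar) + ‖z k - xstar‖^2 := by
    intro k
    have hnorm : ‖z (k+1) - xstar‖^2 = ‖z k - xstar‖^2
        - 2*((s*((k:ℝ)+2))/2)*⟪g (x k), z k - xstar⟫
        + ((s*((k:ℝ)+2))/2)^2*‖g (x k)‖^2 := by
      rw [hzrec k]
      have hre : z k - ((s*((k:ℝ)+2))/2) • g (x k) - xstar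
          = (z k - xstar) - ((s*((k:ℝ)+2))/2) • g (x k) := by abel
      rw [hre, norm_sub_sq_real, real_inner_smul_right, norm_smul, Real.norm_eq_abs,
        mul_pow, sq_abs, real_inner_comm]
      ring
    have hinner : ⟪g (x k), z k - xstar⟫
        = ⟪g (x k), x k - xstar⟫ + (k:ℝ)/2 * ⟪g (x k), x k - y k⟫ := by
      have hre : z k - xstar = (x k - xstar) + ((k:ℝ)/2) • (x k - y k) := by
        simp only [hz]; abel
      rw [hre, inner_add_right, real_inner_smul_right]
    have hP : f (x k) - f xstar ≤ ⟪g (x k), x k - xstar⟫ := by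
      have h := grad_convex_ineq hconv hgrad (x k) xstar
      have he : xstar - x k = -(x k - xstar) := by abel
      rw [he, inner_neg_right] at h
      linarith
    have hQ : f (x k) - f (y k) ≤ ⟪g (x k), x k - y k⟫ := by
      have h := grad_convex_ineq hconv hgrad (x k) (y k)
      have he : y k - x k = -(x k - y k) := by abel
      rw [he, inner_neg_right] at h
      linarith
    have hdesc : f (y (k+1)) ≤ f (x k) - 5*s/6 * ‖g (x k)‖^2 := by
      rw [hy k]
      have h := descent_lemma hgrad hlip (x k) (x k - s • g (x k))
      have he : x k - s • g (x k) - x k = -(s • g (x k)) := by abel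
      rw [he, inner_neg_right, real_inner_smul_right, real_inner_self_eq_norm_sq,
        norm_neg, norm_smul, Real.norm_eq_abs, mul_pow, sq_abs] at h
      have hG : (0:ℝ) ≤ ‖g (x k)‖^2 := sq_nonneg _
      nlinarith [mul_nonneg hs.le hG, mul_nonneg (mul_nonneg hs.le hs.le) hG]
    have hB : 0 ≤ f (y k) - f xstar := sub_nonneg.2 (hmin _)
    have hC : 0 ≤ f (y (k+1)) - f xstar := sub_nonneg.2 (hmin _)
    have hG : (0:ℝ) ≤ ‖g (x k)‖^2 := sq_nonneg _
    have hK : (0:ℝ) ≤ (k:ℝ) := Nat.cast_nonneg k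
    rw [hnorm, hinner]
    nlinarith [mul_le_mul_of_nonneg_left hP (by positivity : (0:ℝ) ≤ s * ((k:ℝ)+2)),
      mul_le_mul_of_nonneg_left hQ (by positivity : (0:ℝ) ≤ s * ((k:ℝ)+2) * ((k:ℝ)/2)),
      mul_le_mul_of_nonneg_left hdesc (by positivity : (0:ℝ) ≤ s * ((k:ℝ)+2)^2/2),
      mul_nonneg hs.le hC, mul_nonneg hs.le hB,
      mul_nonneg (mul_nonneg hs.le hs.le) hG]
  -- telescoping
  have hE0 : z 0 = x 0 := by simp [hz]
  have htel : ∀ k : ℕ,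
      (∑ i ∈ Finset.range (k+1), s^2*((i:ℝ)+2)^2/6 * ‖g (x i)‖^2)
        + (s * (((k:ℝ)+1)*((k:ℝ)+3)/2) * (f (y (k+1)) - f xstar) + ‖z (k+1) - xstar‖^2)
      ≤ ‖x 0 - xstar‖^2 := by
    intro k
    induction k with
    | zero =>
      have h := hstep 0
      simp only [Finset.sum_range_one, Nat.cast_zero] at *
      rw [hE0] at h
      norm_num at h ⊢
      linarith
    | succ k ih =>
      have h := hstep (k+1)
      push_cast at h
      rw [Finset.sum_range_succ]
      push_cast
      linarith
  -- conclusion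
  intro k
  obtain ⟨i, hi_mem, hi_min⟩ := Finset.exists_min_image (Finset.range (k+1))
    (fun i => ‖g (x i)‖^2) ⟨0, by simp⟩
  refine ⟨i, Nat.lt_succ_iff.mp (Finset.mem_range.mp hi_mem), ?_⟩
  have hB : 0 ≤ f (y (k+1)) - f xstar := sub_nonneg.2 (hmin _)
  have hEk : (∑ j ∈ Finset.range (k+1), s^2*((j:ℝ)+2)^2/6 * ‖g (x j)‖^2)
      ≤ ‖x 0 - xstar‖^2 := by
    have h := htel k
    have hterm : 0 ≤ s * (((k:ℝ)+1)*((k:ℝ)+3)/2) * (f (y (k+1)) - f xstar) :=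
      mul_nonneg (mul_nonneg hs.le (by positivity)) hB
    linarith [sq_nonneg ‖z (k+1) - xstar‖]
  have hsum_ge : (∑ j ∈ Finset.range (k+1), s^2*((j:ℝ)+2)^2/6) * ‖g (x i)‖^2
      ≤ ∑ j ∈ Finset.range (k+1), s^2*((j:ℝ)+2)^2/6 * ‖g (x j)‖^2 := by
    rw [Finset.sum_mul]
    refine Finset.sum_le_sum fun j hj => ?_
    exact mul_le_mul_of_nonneg_left (hi_min j hj) (by positivity)
  have hfac : (∑ j ∈ Finset.range (k+1), s^2*((j:ℝ)+2)^2/6)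
      = s^2/6 * ∑ j ∈ Finset.range (k+1), ((j:ℝ)+2)^2 := by
    rw [Finset.mul_sum]
    refine Finset.sum_congr rfl fun j _ => by ring
  have hcube := cube_le_sum_sq k
  have hGi : (0:ℝ) ≤ ‖g (x i)‖^2 := sq_nonneg _
  have hD : (0:ℝ) ≤ ‖x 0 - xstar‖^2 := sq_nonneg _
  rw [hfac] at hsum_ge
  have hkey : ‖g (x i)‖^2 * (s^2 * ((k:ℝ)+1)^3) ≤ 18 * ‖x 0 - xstar‖^2 := by
    nlinarith [mul_le_mul_of_nonneg_left hcube (by positivity : (0:ℝ) ≤ s^2/6 * ‖g (x i)‖^2)]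
  rw [le_div_iff₀ (by positivity : (0:ℝ) < s^2 * ((k:ℝ)+1)^3)]
  nlinarith [hD]
end

section
/- Let f : ℝⁿ → ℝ be convex with L-Lipschitz gradient, with minimizer x⋆, and let 0 < s ≤ 1/(3L). Define the NAG-C iterates x₀ = y₀, y_{k+1} = x_k - s∇f(x_k), x_{k+1} = y_{k+1} + (k/(k+3))(y_{k+1} - y_k). Then for all k ≥ 0, f(x_k) - f(x⋆) ≤ 119·‖x₀ - x⋆‖²/(s(k+1)²). -/
set_option maxHeartbeats 1000000

open Set InnerProductSpace

local notation "⟪" a ", " b "⟫" => @inner ℝ _ _ a b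

variable {n : ℕ}

/-- Quadratic upper bound (weak descent lemma, constant L instead of L/2). -/
lemma nag_upper {f : EuclideanSpace ℝ (Fin n) → ℝ}
    {g : EuclideanSpace ℝ (Fin n) → EuclideanSpace ℝ (Fin n)} {L : ℝ} (hL : 0 ≤ L)
    (hgrad : ∀ x, HasGradientAt f (g x) x)
    (hlip : ∀ a b, ‖g a - g b‖ ≤ L * ‖a - b‖) (a b : EuclideanSpace ℝ (Fin n)) :
    f b ≤ f a + ⟪g a, b - a⟫ + L * ‖b - a‖ ^ 2 := by
  have hder : ∀ z ∈ segment ℝ a b, HasFDerivWithinAt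
      (fun z => f z - (toDual ℝ (EuclideanSpace ℝ (Fin n)) (g a)) z)
      ((toDual ℝ (EuclideanSpace ℝ (Fin n)) (g z)) - (toDual ℝ (EuclideanSpace ℝ (Fin n)) (g a)))
      (segment ℝ a b) z := fun z _ =>
    (((hgrad z).hasFDerivAt.sub (toDual ℝ (EuclideanSpace ℝ (Fin n)) (g a)).hasFDerivAt)).hasFDerivWithinAt
  have hbound : ∀ z ∈ segment ℝ a b,
      ‖(toDual ℝ (EuclideanSpace ℝ (Fin n)) (g z)) - (toDual ℝ (EuclideanSpace ℝ (Fin n)) (g a))‖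
        ≤ L * ‖b - a‖ := by
    intro z hz
    rw [segment_eq_image'] at hz
    obtain ⟨t, ht, rfl⟩ := hz
    have h1 : ‖toDual ℝ (EuclideanSpace ℝ (Fin n)) (g (a + t • (b - a)))
        - toDual ℝ (EuclideanSpace ℝ (Fin n)) (g a)‖ = ‖g (a + t • (b - a)) - g a‖ := by
      rw [← map_sub]
      exact (toDual ℝ (EuclideanSpace ℝ (Fin n))).toLinearIsometry.norm_map _
    rw [h1]
    calc ‖g (a + t • (b - a)) - g a‖ ≤ L * ‖a + t • (b - a) - a‖ := hlip _ _
      _ = L * (t * ‖b - a‖) := by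
          rw [add_sub_cancel_left, norm_smul, Real.norm_eq_abs, abs_of_nonneg ht.1]
      _ ≤ L * (1 * ‖b - a‖) := by
          apply mul_le_mul_of_nonneg_left _ hL
          exact mul_le_mul_of_nonneg_right ht.2 (norm_nonneg _)
      _ = L * ‖b - a‖ := by ring
  have key := (convex_segment a b).norm_image_sub_le_of_norm_hasFDerivWithin_le hder hbound
    (left_mem_segment ℝ a b) (right_mem_segment ℝ a b)
  rw [Real.norm_eq_abs] at key
  have h2 := (le_abs_self _).trans key
  have h3 : (toDual ℝ (EuclideanSpace ℝ (Fin n)) (g a)) b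
      - (toDual ℝ (EuclideanSpace ℝ (Fin n)) (g a)) a = ⟪g a, b - a⟫ := by
    rw [toDual_apply_apply, toDual_apply_apply, ← inner_sub_right]
  nlinarith [h2, h3]

/-- Gradient inequality for convex functions. -/
lemma nag_lower {f : EuclideanSpace ℝ (Fin n) → ℝ}
    {g : EuclideanSpace ℝ (Fin n) → EuclideanSpace ℝ (Fin n)}
    (hgrad : ∀ x, HasGradientAt f (g x) x)
    (hconv : ConvexOn ℝ Set.univ f) (a b : EuclideanSpace ℝ (Fin n)) :
    f a + ⟪g a, b - a⟫ ≤ f b := by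
  have hrep : ⇑(AffineMap.lineMap a b : ℝ →ᵃ[ℝ] EuclideanSpace ℝ (Fin n))
      = fun t : ℝ => t • (b - a) + a := by
    funext t; simp [AffineMap.lineMap_apply_module']
  have hφconv : ConvexOn ℝ Set.univ (fun t : ℝ => f (t • (b - a) + a)) := by
    have h := hconv.comp_affineMap (AffineMap.lineMap a b : ℝ →ᵃ[ℝ] EuclideanSpace ℝ (Fin n))
    simpa [Function.comp_def, hrep] using h
  have hcurve : HasDerivAt (fun t : ℝ => t • (b - a) + a) (b - a) 0 := by
    simpa using ((hasDerivAt_id (0:ℝ)).smul_const (b - a)).add_const a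
  have hline : HasDerivAt (fun t : ℝ => f (t • (b - a) + a)) ⟪g a, b - a⟫ 0 := by
    have h := (hgrad ((0:ℝ) • (b - a) + a)).hasFDerivAt.comp_hasDerivAt 0 hcurve
    simpa [toDual_apply_apply, Function.comp_def] using h
  have hs := hφconv.le_slope_of_hasDerivAt (Set.mem_univ (0:ℝ)) (Set.mem_univ (1:ℝ))
    one_pos hline
  rw [slope_def_field] at hs
  have e0 : (0:ℝ) • (b - a) + a = a := by simp
  have e1 : (1:ℝ) • (b - a) + a = b := by simp
  rw [e0, e1, sub_zero, div_one] at hs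
  linarith

/-- Gradient vanishes at the minimizer. -/
lemma nag_grad_zero {f : EuclideanSpace ℝ (Fin n) → ℝ}
    {g : EuclideanSpace ℝ (Fin n) → EuclideanSpace ℝ (Fin n)}
    (hgrad : ∀ x, HasGradientAt f (g x) x)
    {xstar : EuclideanSpace ℝ (Fin n)} (hmin : ∀ z, f xstar ≤ f z) :
    g xstar = 0 := by
  have hloc : IsLocalMin f xstar := Filter.Eventually.of_forall hmin
  have h0 := hloc.hasFDerivAt_eq_zero (hgrad xstar).hasFDerivAt
  have h1 : ⟪g xstar, g xstar⟫ = 0 := by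
    have h2 := congrFun (congrArg DFunLike.coe h0) (g xstar)
    simpa [toDual_apply_apply] using h2
  exact inner_self_eq_zero.mp h1

/-- Gradient norm bound: ‖g z‖² ≤ 4L(f z - f⋆). -/
lemma nag_grad_sq {f : EuclideanSpace ℝ (Fin n) → ℝ}
    {g : EuclideanSpace ℝ (Fin n) → EuclideanSpace ℝ (Fin n)} {L : ℝ} (hL : 0 < L)
    (hgrad : ∀ x, HasGradientAt f (g x) x)
    (hlip : ∀ a b, ‖g a - g b‖ ≤ L * ‖a - b‖)
    {xstar : EuclideanSpace ℝ (Fin n)} (hmin : ∀ z, f xstar ≤ f z)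
    (z : EuclideanSpace ℝ (Fin n)) :
    ‖g z‖ ^ 2 ≤ 4 * L * (f z - f xstar) := by
  have h := nag_upper hL.le hgrad hlip z (z - (1 / (2 * L)) • g z)
  have h1 : z - (1 / (2 * L)) • g z - z = -((1 / (2 * L)) • g z) := by abel
  rw [h1] at h
  have h2 : ⟪g z, -((1 / (2 * L)) • g z)⟫ = -(1 / (2 * L)) * ‖g z‖ ^ 2 := by
    rw [inner_neg_right, real_inner_smul_right, real_inner_self_eq_norm_sq]; ring
  have h3 : ‖-((1 / (2 * L)) • g z)‖ ^ 2 = (1 / (2 * L)) ^ 2 * ‖g z‖ ^ 2 := by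
    rw [norm_neg, norm_smul, mul_pow, Real.norm_eq_abs, sq_abs]
  rw [h2, h3] at h
  have h4 := hmin (z - (1 / (2 * L)) • g z)
  have e : L * (1 / (2 * L)) ^ 2 * ‖g z‖ ^ 2 = 1 / (4 * L) * ‖g z‖ ^ 2 := by
    field_simp; ring
  have e2 : 1 / (2 * L) * ‖g z‖ ^ 2 - 1 / (4 * L) * ‖g z‖ ^ 2 = ‖g z‖ ^ 2 / (4 * L) := by
    field_simp; ring
  have h5 : ‖g z‖ ^ 2 / (4 * L) ≤ f z - f xstar := by nlinarith [h, h4]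
  calc ‖g z‖ ^ 2 = ‖g z‖ ^ 2 / (4 * L) * (4 * L) := by field_simp
    _ ≤ (f z - f xstar) * (4 * L) := by
        exact mul_le_mul_of_nonneg_right h5 (by positivity)
    _ = 4 * L * (f z - f xstar) := by ring

/-- Key inequality for one gradient step. -/
lemma nag_key {f : EuclideanSpace ℝ (Fin n) → ℝ}
    {g : EuclideanSpace ℝ (Fin n) → EuclideanSpace ℝ (Fin n)} {L s : ℝ} (hL : 0 < L)
    (hgrad : ∀ x, HasGradientAt f (g x) x)
    (hconv : ConvexOn ℝ Set.univ f)
    (hlip : ∀ a b, ‖g a - g b‖ ≤ L * ‖a - b‖)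
    (hs : 0 < s) (hLs : L * s ≤ 1 / 3) (a z : EuclideanSpace ℝ (Fin n)) :
    2 * s * (f (a - s • g a) - f z) ≤ ‖a - z‖ ^ 2 - ‖a - s • g a - z‖ ^ 2 := by
  have hA := nag_upper hL.le hgrad hlip a (a - s • g a)
  have hb : a - s • g a - a = -(s • g a) := by abel
  rw [hb] at hA
  have h1 : ⟪g a, -(s • g a)⟫ = -(s * ‖g a‖ ^ 2) := by
    rw [inner_neg_right, real_inner_smul_right, real_inner_self_eq_norm_sq]
  have h2 : ‖-(s • g a)‖ ^ 2 = s ^ 2 * ‖g a‖ ^ 2 := by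
    rw [norm_neg, norm_smul, mul_pow, Real.norm_eq_abs, sq_abs]
  rw [h1, h2] at hA
  have hB := nag_lower hgrad hconv a z
  have h4 : ⟪g a, z - a⟫ = -⟪g a, a - z⟫ := by
    rw [← inner_neg_right]; congr 1; abel
  rw [h4] at hB
  have h3 : ‖a - s • g a - z‖ ^ 2
      = ‖a - z‖ ^ 2 - 2 * (s * ⟪g a, a - z⟫) + s ^ 2 * ‖g a‖ ^ 2 := by
    have e : a - s • g a - z = (a - z) - s • g a := by abel
    have e1 : ⟪a - z, s • g a⟫ = s * ⟪g a, a - z⟫ := by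
      rw [real_inner_smul_right, real_inner_comm]
    have e2 : ‖s • g a‖ ^ 2 = s ^ 2 * ‖g a‖ ^ 2 := by
      rw [norm_smul, mul_pow, Real.norm_eq_abs, sq_abs]
    rw [e, norm_sub_sq_real, e1, e2]
  have hAB : f (a - s • g a) ≤ f z + ⟪g a, a - z⟫ - s * ‖g a‖ ^ 2
      + L * (s ^ 2 * ‖g a‖ ^ 2) := by linarith
  have hscaled := mul_le_mul_of_nonneg_left hAB (by positivity : (0:ℝ) ≤ 2 * s)
  have hq : (0:ℝ) ≤ s ^ 2 * ‖g a‖ ^ 2 := by positivity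
  have h6 : L * s * (s ^ 2 * ‖g a‖ ^ 2) ≤ 1 / 3 * (s ^ 2 * ‖g a‖ ^ 2) :=
    mul_le_mul_of_nonneg_right hLs hq
  rw [h3]
  nlinarith [hscaled, h6, hq]




/-- Function value convergence of NAG-C at the accelerated rate. -/
theorem nag_c_function_value_rate {n : ℕ}
    (f : EuclideanSpace ℝ (Fin n) → ℝ)
    (g : EuclideanSpace ℝ (Fin n) → EuclideanSpace ℝ (Fin n))
    (L s : ℝ) (hL : 0 < L)
    (hgrad : ∀ x, HasGradientAt f (g x) x)
    (hconv : ConvexOn ℝ Set.univ f)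
    (hlip : ∀ a b, ‖g a - g b‖ ≤ L * ‖a - b‖)
    (xstar : EuclideanSpace ℝ (Fin n)) (hmin : ∀ z, f xstar ≤ f z)
    (hs : 0 < s) (hsL : s ≤ 1 / (3 * L))
    (x y : ℕ → EuclideanSpace ℝ (Fin n)) (h0 : x 0 = y 0)
    (hy : ∀ k : ℕ, y (k + 1) = x k - s • g (x k))
    (hx : ∀ k : ℕ, x (k + 1) = y (k + 1) + ((k : ℝ) / ((k : ℝ) + 3)) • (y (k + 1) - y k)) :
    ∀ k : ℕ, f (x k) - f xstar ≤ 119 * ‖x 0 - xstar‖ ^ 2 / (s * ((k : ℝ) + 1) ^ 2) := by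
  have hLs : L * s ≤ 1 / 3 := by
    rw [le_div_iff₀ (by positivity : (0:ℝ) < 3 * L)] at hsL
    linarith
  have hkey : ∀ m z, 2 * s * (f (y (m + 1)) - f z) ≤ ‖x m - z‖ ^ 2 - ‖y (m + 1) - z‖ ^ 2 := by
    intro m z
    rw [hy m]
    exact nag_key hL hgrad hconv hlip hs hLs (x m) z
  set R : ℝ := ‖x 0 - xstar‖ with hR
  have hR0 : 0 ≤ R := norm_nonneg _
  set v : ℕ → ℝ := fun m => f (y m) - f xstar with hv
  have hv0 : ∀ m, 0 ≤ v m := fun m => sub_nonneg.2 (hmin _)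
  set u : ℕ → EuclideanSpace ℝ (Fin n) :=
    fun m => (((m : ℝ) + 2) / 2) • (x m - xstar) - ((m : ℝ) / 2) • (y m - xstar) with hu
  set En : ℕ → ℝ := fun m => s / 2 * ((m : ℝ) + 1) ^ 2 * v m + ‖u m‖ ^ 2 with hEn
  clear_value R v u En
  -- identity (iii)
  have hiii : ∀ m : ℕ, u (m + 1) = (y (m + 1) - xstar) + ((m : ℝ) / 2) • (y (m + 1) - y m) := by
    intro m
    have h3 : ((m : ℝ) + 3) ≠ 0 := by positivity
    simp only [hu]
    rw [hx m]
    push_cast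
    match_scalars <;> field_simp <;> ring
  -- energy decay
  have hstep : ∀ m : ℕ, En (m + 1) ≤ En m := by
    intro m
    set τ : ℝ := ((m : ℝ) + 2) / 2 with hτ
    have hτpos : 0 < τ := by positivity
    have hτ1 : 1 ≤ τ := by simp only [hτ]; have : (0:ℝ) ≤ (m:ℝ) := Nat.cast_nonneg m; linarith
    set z : EuclideanSpace ℝ (Fin n) := ((τ - 1) / τ) • (y m) + (1 / τ) • xstar with hz
    clear_value τ z
    have hkz := hkey m z
    have hxz : x m - z = (1 / τ) • u m := by
      simp only [hu, hz, hτ]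
      match_scalars <;> field_simp <;> ring
    have hyz : y (m + 1) - z = (1 / τ) • u (m + 1) := by
      rw [hiii m]
      simp only [hz, hτ]
      match_scalars <;> field_simp <;> ring
    have hnx : ‖x m - z‖ ^ 2 = (1 / τ) ^ 2 * ‖u m‖ ^ 2 := by
      rw [hxz, norm_smul, mul_pow, Real.norm_eq_abs, sq_abs]
    have hny : ‖y (m + 1) - z‖ ^ 2 = (1 / τ) ^ 2 * ‖u (m + 1)‖ ^ 2 := by
      rw [hyz, norm_smul, mul_pow, Real.norm_eq_abs, sq_abs]
    have hconvz : f z ≤ (τ - 1) / τ * f (y m) + 1 / τ * f xstar := by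
      have := hconv.2 (mem_univ (y m)) (mem_univ xstar)
        (div_nonneg (by linarith : (0:ℝ) ≤ τ - 1) hτpos.le) (by positivity : (0:ℝ) ≤ 1 / τ)
        (by field_simp; ring)
      simpa [hz] using this
    have h7 : 2 * s * (v (m + 1) - (τ - 1) / τ * v m) ≤ 2 * s * (f (y (m + 1)) - f z) := by
      apply mul_le_mul_of_nonneg_left _ (by positivity : (0:ℝ) ≤ 2 * s)
      simp only [hv]
      have expand : (τ - 1) / τ * f (y m) + 1 / τ * f xstar - f xstar
          = (τ - 1) / τ * (f (y m) - f xstar) := by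
        field_simp
        ring
      nlinarith [hconvz]
    rw [hnx, hny] at hkz
    have h8 : τ ^ 2 * (2 * s * (v (m + 1) - (τ - 1) / τ * v m))
        ≤ ‖u m‖ ^ 2 - ‖u (m + 1)‖ ^ 2 := by
      have h9 := mul_le_mul_of_nonneg_left (h7.trans hkz) (sq_nonneg τ)
      have e : τ ^ 2 * ((1 / τ) ^ 2 * ‖u m‖ ^ 2 - (1 / τ) ^ 2 * ‖u (m + 1)‖ ^ 2)
          = ‖u m‖ ^ 2 - ‖u (m + 1)‖ ^ 2 := by
        field_simp
      linarith [h9, e.le, e.ge]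
    have e2 : τ ^ 2 * (2 * s * (v (m + 1) - (τ - 1) / τ * v m))
        = 2 * s * τ ^ 2 * v (m + 1) - 2 * s * (τ * (τ - 1)) * v m := by
      field_simp
    rw [e2] at h8
    simp only [hEn, hτ] at h8 ⊢
    push_cast at h8 ⊢
    nlinarith [h8, mul_nonneg hs.le (hv0 m), hs.le, hv0 m, hv0 (m+1), sq_nonneg ((m:ℝ)+1)]
  have hmono : ∀ m : ℕ, En m ≤ En 0 := by
    intro m
    induction m with
    | zero => exact le_refl _
    | succ p ih => exact (hstep p).trans ih
  have hu0 : u 0 = x 0 - xstar := by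
    simp only [hu]
    push_cast
    match_scalars <;> norm_num
  have hv0bound : v 0 ≤ L * R ^ 2 := by
    have hq := nag_upper hL.le hgrad hlip xstar (x 0)
    rw [nag_grad_zero hgrad hmin] at hq
    rw [inner_zero_left] at hq
    simp only [hv, ← h0, hR]
    linarith
  have hE0 : En 0 ≤ 7 / 6 * R ^ 2 := by
    simp only [hEn, hu0]
    norm_num
    have ha : s * v 0 ≤ s * (L * R ^ 2) := mul_le_mul_of_nonneg_left hv0bound hs.le
    have hb : L * s * R ^ 2 ≤ 1 / 3 * R ^ 2 := mul_le_mul_of_nonneg_right hLs (sq_nonneg R)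
    nlinarith [ha, hb, sq_nonneg R]
  have hEb : ∀ m, En m ≤ 7 / 6 * R ^ 2 := fun m => (hmono m).trans hE0
  have hvb : ∀ m : ℕ, s / 2 * ((m : ℝ) + 1) ^ 2 * v m ≤ 7 / 6 * R ^ 2 := by
    intro m
    have := hEb m
    simp only [hEn] at this
    nlinarith [sq_nonneg ‖u m‖]
  have hub : ∀ m : ℕ, ‖u m‖ ≤ 11 / 10 * R := by
    intro m
    have h1 : ‖u m‖ ^ 2 ≤ (11 / 10 * R) ^ 2 := by
      have := hEb m
      simp only [hEn] at this
      nlinarith [mul_nonneg (mul_nonneg (by linarith : (0:ℝ) ≤ s / 2)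
        (sq_nonneg ((m:ℝ) + 1))) (hv0 m), sq_nonneg R]
    have h2 := Real.sqrt_le_sqrt h1
    rwa [Real.sqrt_sq (norm_nonneg _), Real.sqrt_sq (by positivity)] at h2
  -- uniform bound on ‖y m - xstar‖
  have hyb : ∀ m : ℕ, ‖y m - xstar‖ ≤ 11 / 10 * R := by
    intro m
    induction m with
    | zero =>
      rw [← h0]
      simp only [hR]
      linarith
    | succ p ih =>
      have hid : (((p : ℝ) + 2) / 2) • (y (p + 1) - xstar)
          = u (p + 1) + ((p : ℝ) / 2) • (y p - xstar) := by
        rw [hiii p]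
        match_scalars <;> ring
      have hn : (((p : ℝ) + 2) / 2) * ‖y (p + 1) - xstar‖
          ≤ ‖u (p + 1)‖ + ((p : ℝ) / 2) * ‖y p - xstar‖ := by
        calc (((p : ℝ) + 2) / 2) * ‖y (p + 1) - xstar‖
            = ‖(((p : ℝ) + 2) / 2) • (y (p + 1) - xstar)‖ := by
              rw [norm_smul, Real.norm_eq_abs, abs_of_nonneg (by positivity)]
          _ = ‖u (p + 1) + ((p : ℝ) / 2) • (y p - xstar)‖ := by rw [hid]
          _ ≤ ‖u (p + 1)‖ + ‖((p : ℝ) / 2) • (y p - xstar)‖ := norm_add_le _ _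
          _ = ‖u (p + 1)‖ + ((p : ℝ) / 2) * ‖y p - xstar‖ := by
              rw [norm_smul, Real.norm_eq_abs, abs_of_nonneg (by positivity)]
      have hp0 : (0:ℝ) ≤ (p : ℝ) := Nat.cast_nonneg p
      have h2 : (((p : ℝ) + 2) / 2) * ‖y (p + 1) - xstar‖
          ≤ (((p : ℝ) + 2) / 2) * (11 / 10 * R) := by
        calc (((p : ℝ) + 2) / 2) * ‖y (p + 1) - xstar‖
            ≤ ‖u (p + 1)‖ + ((p : ℝ) / 2) * ‖y p - xstar‖ := hn
          _ ≤ 11 / 10 * R + ((p : ℝ) / 2) * (11 / 10 * R) := by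
              have := hub (p + 1)
              have := mul_le_mul_of_nonneg_left ih (by positivity : (0:ℝ) ≤ (p : ℝ) / 2)
              linarith
          _ = (((p : ℝ) + 2) / 2) * (11 / 10 * R) := by ring
      have hpos : (0:ℝ) < ((p : ℝ) + 2) / 2 := by positivity
      exact le_of_mul_le_mul_left h2 hpos
  -- displacement bound
  have hdisp : ∀ m : ℕ, (((m : ℝ) + 2) / 2) * ‖y (m + 1) - y m‖ ≤ 11 / 5 * R := by
    intro m
    have hid : (((m : ℝ) + 2) / 2) • (y (m + 1) - y m) = u (m + 1) - (y m - xstar) := by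
      rw [hiii m]
      match_scalars <;> ring
    calc (((m : ℝ) + 2) / 2) * ‖y (m + 1) - y m‖
        = ‖(((m : ℝ) + 2) / 2) • (y (m + 1) - y m)‖ := by
          rw [norm_smul, Real.norm_eq_abs, abs_of_nonneg (by positivity)]
      _ = ‖u (m + 1) - (y m - xstar)‖ := by rw [hid]
      _ ≤ ‖u (m + 1)‖ + ‖y m - xstar‖ := norm_sub_le _ _
      _ ≤ 11 / 10 * R + 11 / 10 * R := add_le_add (hub (m + 1)) (hyb m)
      _ = 11 / 5 * R := by ring
  -- conclusion
  intro k
  rcases k with _ | m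
  · -- k = 0
    rw [le_div_iff₀ (by positivity : (0:ℝ) < s * ((0:ℕ) + 1 : ℝ) ^ 2)]
    have h1 : f (x 0) - f xstar ≤ L * R ^ 2 := by
      have := hv0bound
      simp only [hv, ← h0] at this
      linarith
    have h2 : (f (x 0) - f xstar) * s ≤ 1 / 3 * R ^ 2 := by
      nlinarith [h1, hLs, hs, hL, sq_nonneg R, sub_nonneg.2 (hmin (x 0))]
    push_cast
    nlinarith [h2, sq_nonneg R]
  · -- k = m + 1
    set D : ℝ := ‖x (m + 1) - y (m + 1)‖ with hD
    have hD0 : 0 ≤ D := norm_nonneg _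
    have hPD : ((m : ℝ) + 2) * D ≤ 22 / 5 * R := by
      have h1 : D ≤ ‖y (m + 1) - y m‖ := by
        simp only [hD]
        rw [hx m]
        have e : y (m + 1) + ((m : ℝ) / ((m : ℝ) + 3)) • (y (m + 1) - y m) - y (m + 1)
            = ((m : ℝ) / ((m : ℝ) + 3)) • (y (m + 1) - y m) := by abel
        rw [e, norm_smul, Real.norm_eq_abs, abs_of_nonneg (by positivity)]
        have hc : (m : ℝ) / ((m : ℝ) + 3) ≤ 1 := by
          rw [div_le_one (by positivity)]
          linarith
        nlinarith [norm_nonneg (y (m + 1) - y m), hc]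
      have := hdisp m
      nlinarith [norm_nonneg (y (m + 1) - y m)]
    have hquad := nag_upper hL.le hgrad hlip (y (m + 1)) (x (m + 1))
    have hip : ⟪g (y (m + 1)), x (m + 1) - y (m + 1)⟫ ≤ ‖g (y (m + 1))‖ * D := by
      calc ⟪g (y (m + 1)), x (m + 1) - y (m + 1)⟫
          ≤ ‖g (y (m + 1))‖ * ‖x (m + 1) - y (m + 1)‖ := real_inner_le_norm _ _
        _ = ‖g (y (m + 1))‖ * D := rfl
    have hgsq := nag_grad_sq hL hgrad hlip hmin (y (m + 1))
    have hG0 : 0 ≤ ‖g (y (m + 1))‖ := norm_nonneg _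
    -- ‖g‖ * D ≤ v (m+1) + L * D ^ 2
    have hAM : ‖g (y (m + 1))‖ * D ≤ (f (y (m + 1)) - f xstar) + L * D ^ 2 := by
      have h4L : 4 * L * (‖g (y (m + 1))‖ * D)
          ≤ 4 * L * ((f (y (m + 1)) - f xstar) + L * D ^ 2) := by
        nlinarith [sq_nonneg (‖g (y (m + 1))‖ - 2 * L * D), hgsq]
      exact le_of_mul_le_mul_left h4L (by positivity : (0:ℝ) < 4 * L)
    have hcomb : f (x (m + 1)) - f xstar ≤ 2 * v (m + 1) + 2 * L * D ^ 2 := by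
      simp only [hv]
      nlinarith [hquad, hip, hAM]
    have hE1 : s / 2 * ((m : ℝ) + 2) ^ 2 * v (m + 1) ≤ 7 / 6 * R ^ 2 := by
      have := hvb (m + 1)
      push_cast at this
      convert this using 3 <;> ring
    have hPD2 : (((m : ℝ) + 2) * D) ^ 2 ≤ (22 / 5) ^ 2 * R ^ 2 := by
      nlinarith [hPD, mul_nonneg (by positivity : (0:ℝ) ≤ (m : ℝ) + 2) hD0, hR0]
    have hsL0 : 0 ≤ s * L := by positivity
    have hterm : s * L * (((m : ℝ) + 2) * D) ^ 2 ≤ 1 / 3 * ((22 / 5) ^ 2 * R ^ 2) := by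
      have h1 : s * L ≤ 1 / 3 := by linarith
      have h2 : (0:ℝ) ≤ (((m : ℝ) + 2) * D) ^ 2 := sq_nonneg _
      exact mul_le_mul h1 hPD2 h2 (by norm_num : (0:ℝ) ≤ 1/3)
    rw [le_div_iff₀ (by positivity : (0:ℝ) < s * (((m + 1 : ℕ) : ℝ) + 1) ^ 2)]
    push_cast
    have hmul := mul_le_mul_of_nonneg_right hcomb
      (by positivity : (0:ℝ) ≤ s * ((m : ℝ) + 2) ^ 2)
    nlinarith [hmul, hE1, hterm, sq_nonneg R, hv0 (m + 1), hs,
      mul_nonneg hs.le (sq_nonneg ((m:ℝ) + 2))]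
end

section
/- Let f : ℝⁿ → ℝ be convex with L-Lipschitz gradient and minimizer x⋆, 0 < s ≤ 1/(3L). Let (x_k, v_k) satisfy the NAG-C phase-space recursion x_{k+1} = x_k + √s·v_k, v_{k+1} = v_k - (3/(k+1))v_{k+1} - √s(∇f(x_{k+1}) - ∇f(x_k)) - (1+3/(k+1))√s∇f(x_{k+1}), with v₀ = -√s∇f(x₀). Define E(k) = s(k+3)(k+1)(f(x_k) - f(x⋆)) + (1/2)‖(k+1)√s·v_k + 2(x_{k+1} - x⋆) + (k+1)s∇f(x_k)‖². Then for all k ≥ 0, E(k+1) - E(k) ≤ -(s²/2)[(k+3)(k-1) - Ls(k+3)(k+1)]·‖∇f(x_{k+1})‖². -/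
section helpers

open InnerProductSpace in
/-- Derivative of f along a line, from the gradient. -/
lemma nagc_line_deriv {E : Type*} [NormedAddCommGroup E] [InnerProductSpace ℝ E]
    [CompleteSpace E] {f : E → ℝ} {g : E → E}
    (hgrad : ∀ x, HasGradientAt f (g x) x) (p d : E) (t : ℝ) :
    HasDerivAt (fun t : ℝ => f (p + t • d)) (inner ℝ (g (p + t • d)) d : ℝ) t := by
  have hc : HasDerivAt (fun t : ℝ => p + t • d) d t := by
    simpa using ((hasDerivAt_id t).smul_const d).const_add p
  have hf := (hasGradientAt_iff_hasFDerivAt.mp (hgrad (p + t • d)))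
  have := hf.comp_hasDerivAt t hc
  simp at this; exact this

open InnerProductSpace in
/-- Convexity gradient inequality. -/
lemma nagc_convex_grad {E : Type*} [NormedAddCommGroup E] [InnerProductSpace ℝ E]
    [CompleteSpace E] {f : E → ℝ} {g : E → E}
    (hgrad : ∀ x, HasGradientAt f (g x) x) (hconv : ConvexOn ℝ Set.univ f)
    (p q : E) : (inner ℝ (g p) (q - p) : ℝ) ≤ f q - f p := by
  set d := q - p with hd
  have hφ : ConvexOn ℝ Set.univ (fun t : ℝ => f (p + t • d)) := by
    have h1 : ConvexOn ℝ ((AffineMap.lineMap p q : ℝ →ᵃ[ℝ] E) ⁻¹' Set.univ)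
        (f ∘ (AffineMap.lineMap p q : ℝ →ᵃ[ℝ] E)) := hconv.comp_affineMap _
    simp only [Set.preimage_univ] at h1
    convert h1 using 1
    funext t
    simp [AffineMap.lineMap_apply, hd, Function.comp]
    congr 1
    module
  have hder : HasDerivAt (fun t : ℝ => f (p + t • d)) (inner ℝ (g p) d : ℝ) 0 := by
    have := nagc_line_deriv hgrad p d 0
    simpa using this
  have hslope := hφ.le_slope_of_hasDerivAt (Set.mem_univ 0) (Set.mem_univ 1) zero_lt_one hder
  rw [slope_def_field] at hslope
  simpa [hd] using hslope

open InnerProductSpace in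
/-- Descent lemma. -/
lemma nagc_descent {E : Type*} [NormedAddCommGroup E] [InnerProductSpace ℝ E]
    [CompleteSpace E] {f : E → ℝ} {g : E → E} {L : ℝ} (hL : 0 < L)
    (hgrad : ∀ x, HasGradientAt f (g x) x)
    (hlip : ∀ a b, ‖g a - g b‖ ≤ L * ‖a - b‖)
    (p q : E) : f q ≤ f p + inner ℝ (g p) (q - p) + L / 2 * ‖q - p‖ ^ 2 := by
  set d := q - p with hd
  set ψ : ℝ → ℝ := fun t => f (p + t • d) - t * (inner ℝ (g p) d : ℝ) - L / 2 * ‖d‖ ^ 2 * t ^ 2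
    with hψ
  have hψd : ∀ t : ℝ, HasDerivAt ψ
      ((inner ℝ (g (p + t • d)) d : ℝ) - (inner ℝ (g p) d : ℝ) - L / 2 * ‖d‖ ^ 2 * (2 * t)) t := by
    intro t
    exact ((nagc_line_deriv hgrad p d t).sub (hasDerivAt_mul_const _)).sub
      (((hasDerivAt_pow 2 t).const_mul (L / 2 * ‖d‖ ^ 2)).congr_deriv (by ring))
  have hanti : AntitoneOn ψ (Set.Icc 0 1) := by
    apply antitoneOn_of_deriv_nonpos (convex_Icc 0 1)
    · exact fun t _ => ((hψd t).continuousAt).continuousWithinAt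
    · exact fun t _ => ((hψd t).differentiableAt).differentiableWithinAt
    · intro t ht
      rw [interior_Icc] at ht
      rw [(hψd t).deriv]
      have h1 : (inner ℝ (g (p + t • d)) d : ℝ) - (inner ℝ (g p) d : ℝ)
          = (inner ℝ (g (p + t • d) - g p) d : ℝ) := by rw [inner_sub_left]
      have h2 : (inner ℝ (g (p + t • d) - g p) d : ℝ) ≤ ‖g (p + t • d) - g p‖ * ‖d‖ :=
        real_inner_le_norm _ _
      have h3 : ‖g (p + t • d) - g p‖ ≤ L * ‖t • d‖ := by
        have := hlip (p + t • d) p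
        simpa using this
      have h4 : ‖t • d‖ = t * ‖d‖ := by
        rw [norm_smul, Real.norm_eq_abs, abs_of_pos ht.1]
      have h5 : ‖g (p + t • d) - g p‖ * ‖d‖ ≤ (L * (t * ‖d‖)) * ‖d‖ := by
        apply mul_le_mul_of_nonneg_right _ (norm_nonneg d)
        rw [← h4]; exact h3
      nlinarith [h5]
  have := hanti (Set.mem_Icc.mpr ⟨le_refl 0, zero_le_one⟩)
      (Set.mem_Icc.mpr ⟨zero_le_one, le_refl 1⟩) zero_le_one
  simp only [hψ] at this
  simp only [one_smul, zero_smul, add_zero, one_pow, zero_pow, one_mul, zero_mul,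
    mul_zero, sub_zero, mul_one] at this
  have hq : p + d = q := by rw [hd]; abel
  rw [hq] at this
  linarith

open InnerProductSpace in
/-- Co-coercivity style inequality. -/
lemma nagc_cocoercive {E : Type*} [NormedAddCommGroup E] [InnerProductSpace ℝ E]
    [CompleteSpace E] {f : E → ℝ} {g : E → E} {L : ℝ} (hL : 0 < L)
    (hgrad : ∀ x, HasGradientAt f (g x) x) (hconv : ConvexOn ℝ Set.univ f)
    (hlip : ∀ a b, ‖g a - g b‖ ≤ L * ‖a - b‖)
    (p q : E) :
    2 * L * (f p - f q) + ‖g p - g q‖ ^ 2 ≤ 2 * L * (inner ℝ (g p) (p - q) : ℝ) := by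
  set z : E := q - (1 / L) • (g q - g p) with hz
  have hB := nagc_descent hL hgrad hlip q z
  have hA := nagc_convex_grad hgrad hconv p z
  have hz1 : z - q = -((1 / L) • (g q - g p)) := by rw [hz]; abel
  have hz2 : z - p = (q - p) - (1 / L) • (g q - g p) := by rw [hz]; abel
  rw [hz1] at hB
  rw [hz2] at hA
  have e1 : (inner ℝ (g q) (-((1 / L) • (g q - g p))) : ℝ)
      = -(1 / L) * inner ℝ (g q) (g q - g p) := by
    rw [inner_neg_right, real_inner_smul_right]; ring
  have e2 : ‖-((1 / L) • (g q - g p))‖ ^ 2 = (1 / L) ^ 2 * ‖g q - g p‖ ^ 2 := by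
    rw [norm_neg, norm_smul, mul_pow, Real.norm_eq_abs, sq_abs]
  have e3 : (inner ℝ (g p) ((q - p) - (1 / L) • (g q - g p)) : ℝ)
      = inner ℝ (g p) (q - p) - (1 / L) * inner ℝ (g p) (g q - g p) := by
    rw [inner_sub_right, real_inner_smul_right]
  have e4 : (inner ℝ (g q) (g q - g p) : ℝ) - inner ℝ (g p) (g q - g p)
      = ‖g q - g p‖ ^ 2 := by
    rw [← inner_sub_left, real_inner_self_eq_norm_sq]
  have e5 : (inner ℝ (g p) (p - q) : ℝ) = - inner ℝ (g p) (q - p) := by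
    rw [← inner_neg_right, neg_sub]
  have e6 : ‖g p - g q‖ = ‖g q - g p‖ := norm_sub_rev _ _
  rw [e1, e2] at hB
  rw [e3] at hA
  rw [e5, e6]
  have hL' : (0:ℝ) < 2 * L := by linarith
  -- combine: hA : f p + (inner gp (q-p) - (1/L) inner gp u) ≤ f z
  -- hB : f z ≤ f q + (-(1/L) inner gq u) + L/2 * ((1/L)^2 * ‖u‖^2)
  have key : f p + (inner ℝ (g p) (q - p) : ℝ) - (1 / L) * inner ℝ (g p) (g q - g p)
      ≤ f q - (1 / L) * (inner ℝ (g q) (g q - g p) : ℝ) + 1 / (2 * L) * ‖g q - g p‖ ^ 2 := by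
    have : L / 2 * ((1 / L) ^ 2 * ‖g q - g p‖ ^ 2) = 1 / (2 * L) * ‖g q - g p‖ ^ 2 := by
      field_simp
    linarith
  have key2 : (1 / L) * ‖g q - g p‖ ^ 2 - 1 / (2 * L) * ‖g q - g p‖ ^ 2
      = 1 / (2 * L) * ‖g q - g p‖ ^ 2 := by field_simp; ring
  have e7 : (1 / L) * (inner ℝ (g q) (g q - g p) : ℝ) - (1 / L) * (inner ℝ (g p) (g q - g p) : ℝ)
      = (1 / L) * ‖g q - g p‖ ^ 2 := by rw [← mul_sub, e4]
  have this1 : f p - f q ≤ - (inner ℝ (g p) (q - p) : ℝ) - 1 / (2 * L) * ‖g q - g p‖ ^ 2 := by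
    linarith [key, e7, key2]
  have hfin : 2 * L * (1 / (2 * L) * ‖g q - g p‖ ^ 2) = ‖g q - g p‖ ^ 2 := by field_simp
  have hprod := mul_le_mul_of_nonneg_left this1 (le_of_lt hL')
  linarith [hprod, hfin]
end helpers

set_option maxHeartbeats 1000000 in
/-- Discrete Lyapunov decrease lemma for NAG-C. -/
theorem nag_c_lyapunov_decrease {n : ℕ}
    (f : EuclideanSpace ℝ (Fin n) → ℝ)
    (g : EuclideanSpace ℝ (Fin n) → EuclideanSpace ℝ (Fin n))
    (L s : ℝ) (hL : 0 < L)
    (hgrad : ∀ x, HasGradientAt f (g x) x)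
    (hconv : ConvexOn ℝ Set.univ f)
    (hlip : ∀ a b, ‖g a - g b‖ ≤ L * ‖a - b‖)
    (xstar : EuclideanSpace ℝ (Fin n)) (hmin : ∀ z, f xstar ≤ f z)
    (hs : 0 < s) (hsL : s ≤ 1 / (3 * L))
    (x v : ℕ → EuclideanSpace ℝ (Fin n))
    (hv0 : v 0 = -(Real.sqrt s) • g (x 0))
    (hx : ∀ k : ℕ, x (k + 1) = x k + Real.sqrt s • v k)
    (hv : ∀ k : ℕ, v (k + 1) = v k - (3 / ((k : ℝ) + 1)) • v (k + 1)
          - Real.sqrt s • (g (x (k + 1)) - g (x k))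
          - ((1 + 3 / ((k : ℝ) + 1)) * Real.sqrt s) • g (x (k + 1))) :
    ∀ k : ℕ,
      (s * ((k : ℝ) + 1 + 3) * ((k : ℝ) + 1 + 1) * (f (x (k + 1)) - f xstar)
        + (1/2) * ‖(((k : ℝ) + 1 + 1) * Real.sqrt s) • v (k + 1)
            + (2 : ℝ) • (x (k + 2) - xstar) + (((k : ℝ) + 1 + 1) * s) • g (x (k + 1))‖ ^ 2)
      - (s * ((k : ℝ) + 3) * ((k : ℝ) + 1) * (f (x k) - f xstar)
        + (1/2) * ‖(((k : ℝ) + 1) * Real.sqrt s) • v k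
            + (2 : ℝ) • (x (k + 1) - xstar) + (((k : ℝ) + 1) * s) • g (x k)‖ ^ 2)
      ≤ -(s ^ 2 / 2) * (((k : ℝ) + 3) * ((k : ℝ) - 1) - L * s * ((k : ℝ) + 3) * ((k : ℝ) + 1))
          * ‖g (x (k + 1))‖ ^ 2 := by
  obtain ⟨a, ha0, rfl⟩ : ∃ a : ℝ, 0 ≤ a ∧ s = a * a :=
    ⟨Real.sqrt s, Real.sqrt_nonneg s, (Real.mul_self_sqrt hs.le).symm⟩
  simp only [Real.sqrt_mul_self ha0] at hx hv hv0 ⊢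
  intro k
  have hKne : ((k:ℝ)) + 1 ≠ 0 := by positivity
  -- Step 1: scaled velocity recursion
  have h4 : (((k:ℝ)) + 4) • v (k+1) = (((k:ℝ)) + 1) • v k
      - ((((k:ℝ)) + 1) * a) • (g (x (k+1)) - g (x k)) - ((((k:ℝ)) + 4) * a) • g (x (k+1)) := by
    have h1 := congrArg (fun z => (((k:ℝ)) + 1) • z) (hv k)
    simp only [smul_sub, smul_smul] at h1
    have e1 : (((k:ℝ)) + 1) * (3 / (((k:ℝ)) + 1)) = 3 := by
      field_simp
    have e2 : (((k:ℝ)) + 1) * ((1 + 3 / (((k:ℝ)) + 1)) * a) = (((k:ℝ)) + 4) * a := by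
      rw [← mul_assoc, mul_add, mul_one, e1]
      ring
    rw [e1, e2] at h1
    have h2 : (((k:ℝ)) + 4) • v (k+1)
        = (((k:ℝ)) + 1) • v (k+1) + ((3:ℝ)) • v (k+1) := by module
    rw [h2, h1]
    module
  -- Step 2: key Lyapunov vector identity
  have hkey : (((k:ℝ) + 1 + 1) * a) • v (k + 1)
      + (2 : ℝ) • (x (k + 2) - xstar) + (((k:ℝ) + 1 + 1) * (a * a)) • g (x (k + 1))
      = ((((k:ℝ) + 1) * a) • v k
      + (2 : ℝ) • (x (k + 1) - xstar) + (((k:ℝ) + 1) * (a * a)) • g (x k))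
      - (((k:ℝ) + 3) * (a * a)) • g (x (k + 1)) := by
    have hx1 := hx (k + 1)
    rw [show k + 1 + 1 = k + 2 from rfl] at hx1
    rw [hx1]
    have h5 := congrArg (fun z => a • z) h4
    simp only [smul_sub, smul_smul] at h5
    have h6 : (((k:ℝ) + 1 + 1) * a) • v (k + 1) + (2:ℝ) • (x (k+1) + a • v (k+1) - xstar)
        = (a * ((k:ℝ) + 4)) • v (k+1) + (2:ℝ) • (x (k+1) - xstar) := by module
    rw [h6, h5]
    module
  -- Step 3: expand the norm
  rw [hkey, norm_sub_sq_real]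
  simp only [real_inner_smul_right, inner_add_left, real_inner_smul_left,
    norm_smul, Real.norm_eq_abs, mul_pow, sq_abs]
  -- Step 4: the scalar inequalities
  have hA1 : f (x (k+1)) - f xstar
      ≤ (inner ℝ (x (k+1) - xstar) (g (x (k+1))) : ℝ) := by
    have h := nagc_convex_grad hgrad hconv (x (k+1)) xstar
    have h' : (inner ℝ (x (k+1) - xstar) (g (x (k+1))) : ℝ)
        = - (inner ℝ (g (x (k+1))) (xstar - x (k+1)) : ℝ) := by
      rw [real_inner_comm, ← inner_neg_right, neg_sub]
    linarith
  have hC1 : 2*L*(f (x (k+1)) - f (x k)) + ‖g (x (k+1)) - g (x k)‖^2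
      ≤ 2*L*(a * (inner ℝ (v k) (g (x (k+1))) : ℝ)) := by
    have h := nagc_cocoercive hL hgrad hconv hlip (x (k+1)) (x k)
    have hxx : x (k+1) - x k = a • v k := by rw [hx k]; abel
    rw [hxx, real_inner_smul_right, real_inner_comm] at h
    exact h
  have hY : 2*(L*(a*a)) * (‖g (x (k+1))‖^2 - (inner ℝ (g (x k)) (g (x (k+1))) : ℝ))
      ≤ (L*(a*a))^2 * ‖g (x (k+1))‖^2 + ‖g (x (k+1)) - g (x k)‖^2 := by
    have h0 : (0:ℝ) ≤ ‖(L*(a*a)) • g (x (k+1)) - (g (x (k+1)) - g (x k))‖^2 := sq_nonneg _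
    rw [norm_sub_sq_real, real_inner_smul_left, inner_sub_right,
      real_inner_self_eq_norm_sq, norm_smul, Real.norm_eq_abs, mul_pow, sq_abs,
      real_inner_comm (g (x k)) (g (x (k+1)))] at h0
    linarith
  have hF1 : (0:ℝ) ≤ f (x (k+1)) - f xstar := sub_nonneg.mpr (hmin _)
  -- Step 5: combine
  rw [← mul_le_mul_iff_right₀ (show (0:ℝ) < 2*L by linarith)]
  have m1 := mul_le_mul_of_nonneg_left hA1
    (show (0:ℝ) ≤ 4*L*(((k:ℝ)+3)*(a*a)) by positivity)
  have m2 := mul_le_mul_of_nonneg_left hC1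
    (show (0:ℝ) ≤ ((k:ℝ)+3)*((k:ℝ)+1)*(a*a)*(a*a) by positivity)
  have m3 := mul_le_mul_of_nonneg_left hY
    (show (0:ℝ) ≤ ((k:ℝ)+3)*((k:ℝ)+1)*(a*a) by positivity)
  have m4 := mul_nonneg (show (0:ℝ) ≤ 2*L*(a*a) by positivity) hF1
  nlinarith [m1, m2, m3, m4]
end

section
/- Let f : ℝⁿ → ℝ be twice continuously differentiable, μ-strongly convex with L-Lipschitz gradient (0 < μ ≤ L), with minimizer x⋆, and let s > 0. Suppose X : [0, ∞) → ℝⁿ is a C² solution of Ẍ + 2√μ·Ẋ + √s·∇²f(X)·Ẋ + (1+√(μs))∇f(X) = 0. Define E(t) = (1+√(μs))(f(X(t)) - f(x⋆)) + (1/4)‖Ẋ(t)‖² + (1/4)‖Ẋ(t) + 2√μ(X(t) - x⋆) + √s∇f(X(t))‖². Then for all t ≥ 0, dE/dt ≤ -(√μ/4)·E(t) - (√s/2)[‖∇f(X(t))‖² + ⟨Ẋ(t), ∇²f(X(t))Ẋ(t)⟩]. -/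
open scoped RealInnerProductSpace

private lemma nag_sq3_aux (m r a1 a2 a3 aw : ℝ) (hm : 0 ≤ m) (hr : 0 ≤ r)
    (h1 : 0 ≤ a1) (h2 : 0 ≤ a2) (h3 : 0 ≤ a3) (h0 : 0 ≤ aw)
    (hb : aw ≤ a1 + 2 * m * a2 + r * a3) :
    aw ^ 2 ≤ 3 * (a1 ^ 2 + 4 * m ^ 2 * a2 ^ 2 + r ^ 2 * a3 ^ 2) := by
  nlinarith [sq_nonneg (a1 - 2 * m * a2), sq_nonneg (a1 - r * a3),
    sq_nonneg (2 * m * a2 - r * a3), mul_le_mul hb hb h0 (by positivity)]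

private lemma nag_main_aux (m r a d G F A V P : ℝ) (hm : 0 < m) (hr : 0 < r)
    (ha : 0 ≤ a) (hd : 0 ≤ d) (hG : 0 ≤ G) (hF : 0 ≤ F)
    (hA1 : A ≥ F + m ^ 2 / 2 * d) (hA2 : A ≥ m ^ 2 * d)
    (hV : V ≤ 3 * (a + 4 * m ^ 2 * d + r ^ 2 * G)) :
    -(m * a) - r / 2 * P - (1 + m * r) * m * A - (1 + m * r) * (r / 2) * G
      ≤ -(m / 4) * ((1 + m * r) * F + 1 / 4 * a + 1 / 4 * V) - r / 2 * (G + P) := by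
  nlinarith [mul_le_mul_of_nonneg_left hA1 (by positivity : (0:ℝ) ≤ (1 + m * r) * m / 4),
    mul_le_mul_of_nonneg_left hA2 (by positivity : (0:ℝ) ≤ (1 + m * r) * m * 3 / 4),
    mul_le_mul_of_nonneg_left hV (by positivity : (0:ℝ) ≤ m / 16),
    mul_nonneg hm.le ha,
    mul_nonneg (mul_nonneg (mul_nonneg hm.le hm.le) hm.le) hd,
    mul_nonneg (mul_nonneg (mul_nonneg (mul_nonneg hm.le hm.le) hm.le) hm.le)
      (mul_nonneg hr.le hd),
    mul_nonneg hm.le hF, mul_nonneg (mul_nonneg hm.le hm.le) (mul_nonneg hr.le hF),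
    mul_nonneg (mul_nonneg hm.le hr.le) (mul_nonneg hr.le hG),
    mul_nonneg hm.le (mul_nonneg hr.le hG)]

/-- Continuous Lyapunov decrease for the high-resolution ODE of NAG-SC. -/
theorem nag_sc_ode_lyapunov_decrease {n : ℕ}
    (f : EuclideanSpace ℝ (Fin n) → ℝ)
    (g : EuclideanSpace ℝ (Fin n) → EuclideanSpace ℝ (Fin n))
    (H : EuclideanSpace ℝ (Fin n) → EuclideanSpace ℝ (Fin n) →L[ℝ] EuclideanSpace ℝ (Fin n))
    (μ L s : ℝ) (hμ : 0 < μ) (hμL : μ ≤ L) (hs : 0 < s)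
    (hgrad : ∀ x, HasGradientAt f (g x) x)
    (hhess : ∀ x, HasFDerivAt g (H x) x)
    (hsconv : ∀ a b, f b ≥ f a + ⟪g a, b - a⟫ + μ / 2 * ‖b - a‖ ^ 2)
    (hlip : ∀ a b, ‖g a - g b‖ ≤ L * ‖a - b‖)
    (xstar : EuclideanSpace ℝ (Fin n)) (hmin : ∀ z, f xstar ≤ f z)
    (X X' X'' : ℝ → EuclideanSpace ℝ (Fin n))
    (hX' : ∀ t, HasDerivAt X (X' t) t)
    (hX'' : ∀ t, HasDerivAt X' (X'' t) t)
    (hode : ∀ t, 0 ≤ t →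
      X'' t + (2 * Real.sqrt μ) • X' t + Real.sqrt s • (H (X t)) (X' t)
        + (1 + Real.sqrt (μ * s)) • g (X t) = 0) :
    ∀ t, 0 ≤ t →
      deriv (fun u => (1 + Real.sqrt (μ * s)) * (f (X u) - f xstar)
          + (1/4) * ‖X' u‖ ^ 2
          + (1/4) * ‖X' u + (2 * Real.sqrt μ) • (X u - xstar) + Real.sqrt s • g (X u)‖ ^ 2) t
        ≤ -(Real.sqrt μ / 4) *
            ((1 + Real.sqrt (μ * s)) * (f (X t) - f xstar)
              + (1/4) * ‖X' t‖ ^ 2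
              + (1/4) * ‖X' t + (2 * Real.sqrt μ) • (X t - xstar) + Real.sqrt s • g (X t)‖ ^ 2)
          - (Real.sqrt s / 2) * (‖g (X t)‖ ^ 2 + ⟪X' t, (H (X t)) (X' t)⟫) := by
  intro t ht
  have hm : 0 < Real.sqrt μ := Real.sqrt_pos.mpr hμ
  have hr : 0 < Real.sqrt s := Real.sqrt_pos.mpr hs
  set m := Real.sqrt μ with hm_def
  set r := Real.sqrt s with hr_def
  have hm2 : m ^ 2 = μ := Real.sq_sqrt hμ.le
  have hr2 : r ^ 2 = s := Real.sq_sqrt hs.le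
  have hmr : Real.sqrt (μ * s) = m * r := by
    rw [Real.sqrt_mul hμ.le]
  rw [hmr]
  -- gradient at minimizer is zero
  have hgstar : g xstar = 0 := by
    have hloc : IsLocalMin f xstar := Filter.Eventually.of_forall hmin
    have h0 := hloc.hasFDerivAt_eq_zero (hgrad xstar).hasFDerivAt
    have h1 := congrArg (fun φ : EuclideanSpace ℝ (Fin n) →L[ℝ] ℝ => φ (g xstar)) h0
    simp only [InnerProductSpace.toDual_apply_apply, ContinuousLinearMap.zero_apply,
      real_inner_self_eq_norm_sq] at h1
    simpa [pow_eq_zero_iff] using h1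
  -- derivative facts
  have hgX : HasDerivAt (fun v => g (X v)) ((H (X t)) (X' t)) t :=
    (hhess (X t)).comp_hasDerivAt t (hX' t)
  have hfX : HasDerivAt (fun v => f (X v)) ⟪g (X t), X' t⟫ t := by
    have h := (hgrad (X t)).hasFDerivAt.comp_hasDerivAt t (hX' t)
    simp [InnerProductSpace.toDual_apply_apply] at h
    exact h
  have hwD : HasDerivAt (fun v => X' v + (2 * m) • (X v - xstar) + r • g (X v))
      (X'' t + (2 * m) • X' t + r • (H (X t)) (X' t)) t :=
    ((hX'' t).add (((hX' t).sub_const xstar).const_smul (2 * m))).add (hgX.const_smul r)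
  -- ODE substitution
  have hxdd : X'' t + (2 * m) • X' t + r • (H (X t)) (X' t)
      = -((1 + m * r) • g (X t)) := by
    have h := hode t ht
    rw [hmr] at h
    exact eq_neg_of_add_eq_zero_left h
  set w : ℝ → EuclideanSpace ℝ (Fin n) :=
    fun v => X' v + (2 * m) • (X v - xstar) + r • g (X v) with hw_def
  have hE : HasDerivAt (fun u => (1 + m * r) * (f (X u) - f xstar)
      + (1/4) * ⟪X' u, X' u⟫ + (1/4) * ⟪w u, w u⟫)
      ((1 + m * r) * ⟪g (X t), X' t⟫
        + (1/4) * (⟪X' t, X'' t⟫ + ⟪X'' t, X' t⟫)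
        + (1/4) * (⟪w t, X'' t + (2 * m) • X' t + r • (H (X t)) (X' t)⟫
            + ⟪X'' t + (2 * m) • X' t + r • (H (X t)) (X' t), w t⟫)) t := by
    exact (((hfX.sub_const (f xstar)).const_mul (1 + m * r)).add
        (((hX'' t).inner ℝ (hX'' t)).const_mul (1/4))).add
      ((hwD.inner ℝ hwD).const_mul (1/4))
  have hfun : (fun u => (1 + m * r) * (f (X u) - f xstar)
        + (1/4) * ‖X' u‖ ^ 2
        + (1/4) * ‖X' u + (2 * m) • (X u - xstar) + r • g (X u)‖ ^ 2)
      = (fun u => (1 + m * r) * (f (X u) - f xstar)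
        + (1/4) * ⟪X' u, X' u⟫ + (1/4) * ⟪w u, w u⟫) := by
    funext u
    simp only [hw_def, real_inner_self_eq_norm_sq]
  rw [hfun, hE.deriv]
  -- scalar abbreviations
  have hx2 : X'' t = -((2 * m) • X' t + r • (H (X t)) (X' t) + (1 + m * r) • g (X t)) := by
    have h := hode t ht; rw [hmr] at h
    have h2 : X'' t + ((2 * m) • X' t + r • (H (X t)) (X' t) + (1 + m * r) • g (X t)) = 0 := by
      rw [← h]; abel
    exact eq_neg_of_add_eq_zero_left h2
  have hD : (1 + m * r) * ⟪g (X t), X' t⟫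
        + (1/4) * (⟪X' t, X'' t⟫ + ⟪X'' t, X' t⟫)
        + (1/4) * (⟪w t, X'' t + (2 * m) • X' t + r • (H (X t)) (X' t)⟫
            + ⟪X'' t + (2 * m) • X' t + r • (H (X t)) (X' t), w t⟫)
      = -(m * ⟪X' t, X' t⟫) - (r/2) * ⟪X' t, (H (X t)) (X' t)⟫
        - ((1 + m * r) * m) * ⟪g (X t), X t - xstar⟫
        - ((1 + m * r) * (r/2)) * ⟪g (X t), g (X t)⟫ := by
    have s1 : ⟪X' t, g (X t)⟫ = ⟪g (X t), X' t⟫ := real_inner_comm _ _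
    have s2 : ⟪X t - xstar, g (X t)⟫ = ⟪g (X t), X t - xstar⟫ := real_inner_comm _ _
    have s3 : ⟪(H (X t)) (X' t), X' t⟫ = ⟪X' t, (H (X t)) (X' t)⟫ := real_inner_comm _ _
    have s4 : ⟪X t - xstar, X' t⟫ = ⟪X' t, X t - xstar⟫ := real_inner_comm _ _
    have s5 : ⟪X t - xstar, (H (X t)) (X' t)⟫ = ⟪(H (X t)) (X' t), X t - xstar⟫ :=
      real_inner_comm _ _
    have s6 : ⟪(H (X t)) (X' t), g (X t)⟫ = ⟪g (X t), (H (X t)) (X' t)⟫ := real_inner_comm _ _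
    rw [hx2, hw_def]
    simp only [inner_add_left, inner_add_right, inner_neg_left, inner_neg_right,
      real_inner_smul_left, real_inner_smul_right]
    rw [s1, s2, s3, s4, s5, s6]
    ring
  rw [hD]
  -- key scalar facts
  have hA1 : ⟪g (X t), X t - xstar⟫ ≥ (f (X t) - f xstar) + m ^ 2 / 2 * ‖X t - xstar‖ ^ 2 := by
    have h := hsconv (X t) xstar
    have hn : ‖xstar - X t‖ = ‖X t - xstar‖ := norm_sub_rev _ _
    have hi : ⟪g (X t), xstar - X t⟫ = -⟪g (X t), X t - xstar⟫ := by
      rw [← inner_neg_right]; congr 1; abel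
    rw [hn, hi, ← hm2] at h
    linarith
  have hA2 : ⟪g (X t), X t - xstar⟫ ≥ m ^ 2 * ‖X t - xstar‖ ^ 2 := by
    have h1 := hsconv (X t) xstar
    have h2 := hsconv xstar (X t)
    have hn : ‖xstar - X t‖ = ‖X t - xstar‖ := norm_sub_rev _ _
    have hi : ⟪g (X t), xstar - X t⟫ = -⟪g (X t), X t - xstar⟫ := by
      rw [← inner_neg_right]; congr 1; abel
    rw [hn, hi] at h1
    rw [hgstar] at h2
    simp only [inner_zero_left] at h2
    rw [hm2]
    linarith
  have hF : 0 ≤ f (X t) - f xstar := by linarith [hmin (X t)]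
  have hb : ‖w t‖ ≤ ‖X' t‖ + 2 * m * ‖X t - xstar‖ + r * ‖g (X t)‖ := by
    calc ‖w t‖ ≤ ‖X' t‖ + ‖(2 * m) • (X t - xstar)‖ + ‖r • g (X t)‖ := norm_add₃_le
      _ = ‖X' t‖ + 2 * m * ‖X t - xstar‖ + r * ‖g (X t)‖ := by
          rw [norm_smul, norm_smul, Real.norm_eq_abs, Real.norm_eq_abs,
            abs_of_pos (by positivity), abs_of_pos hr]
  have hV : ‖w t‖ ^ 2 ≤ 3 * (‖X' t‖ ^ 2 + 4 * m ^ 2 * ‖X t - xstar‖ ^ 2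
      + r ^ 2 * ‖g (X t)‖ ^ 2) :=
    nag_sq3_aux m r _ _ _ _ hm.le hr.le (norm_nonneg _) (norm_nonneg _) (norm_nonneg _)
      (norm_nonneg _) hb
  -- final inequality
  have hGi : ⟪g (X t), g (X t)⟫ = ‖g (X t)‖ ^ 2 := real_inner_self_eq_norm_sq _
  have hXi : ⟪X' t, X' t⟫ = ‖X' t‖ ^ 2 := real_inner_self_eq_norm_sq _
  have hwt : ‖X' t + (2 * m) • (X t - xstar) + r • g (X t)‖ = ‖w t‖ := by rw [hw_def]
  rw [hGi, hXi, hwt]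
  have := nag_main_aux m r (‖X' t‖ ^ 2) (‖X t - xstar‖ ^ 2) (‖g (X t)‖ ^ 2)
    (f (X t) - f xstar) (⟪g (X t), X t - xstar⟫) (‖w t‖ ^ 2)
    (⟪X' t, (H (X t)) (X' t)⟫) hm hr (sq_nonneg _) (sq_nonneg _) (sq_nonneg _) hF hA1 hA2 hV
  linarith [this]
end

section
/- Let f : ℝⁿ → ℝ be twice continuously differentiable, convex with L-Lipschitz gradient, with minimizer x⋆, s > 0, t₀ = (3/2)√s. Suppose X : [t₀, ∞) → ℝⁿ is a C² solution of Ẍ + (3/t)Ẋ + √s∇²f(X)Ẋ + (1 + 3√s/(2t))∇f(X) = 0. Define E(t) = t(t + √s/2)(f(X(t)) - f(x⋆)) + (1/2)‖tẊ(t) + 2(X(t) - x⋆) + t√s∇f(X(t))‖². Then for all t ≥ t₀, dE/dt ≤ -[√s·t² + (1/L + s/2)t + √s/(2L)]·‖∇f(X(t))‖². -/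
open Set InnerProductSpace
open scoped RealInnerProductSpace

variable {E : Type*} [NormedAddCommGroup E] [InnerProductSpace ℝ E] [CompleteSpace E]

/-- gradient inequality for convex functions -/
lemma my_grad_convex_ineq {f : E → ℝ} {g : E → E}
    (hgrad : ∀ x, HasGradientAt f (g x) x) (hconv : ConvexOn ℝ Set.univ f)
    (x y : E) : f x + ⟪g x, y - x⟫_ℝ ≤ f y := by
  set c : ℝ → E := fun τ => x + τ • (y - x) with hc
  have hcd : ∀ τ : ℝ, HasDerivAt c (y - x) τ := fun τ => by
    simpa [hc] using ((hasDerivAt_id τ).smul_const (y - x)).const_add x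
  have hh : ∀ τ : ℝ, HasDerivAt (fun τ => f (c τ)) ⟪g (c τ), y - x⟫_ℝ τ := fun τ => by
    simpa [InnerProductSpace.toDual_apply_apply, Function.comp_def] using
      ((hgrad (c τ)).hasFDerivAt.comp_hasDerivAt τ (hcd τ))
  have hconv' : ConvexOn ℝ Set.univ (fun τ : ℝ => f (c τ)) := by
    have h2 := hconv.comp_affineMap (AffineMap.lineMap x y : ℝ →ᵃ[ℝ] E)
    have : (Set.univ : Set ℝ) = (AffineMap.lineMap x y : ℝ →ᵃ[ℝ] E) ⁻¹' Set.univ := by simp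
    rw [this]
    have hfun : (fun τ : ℝ => f (c τ)) = f ∘ ⇑(AffineMap.lineMap x y : ℝ →ᵃ[ℝ] E) := by
      funext τ
      simp [hc, AffineMap.lineMap_apply, add_comm]
    rw [hfun]
    exact h2
  have hslope := hconv'.le_slope_of_hasDerivAt (Set.mem_univ (0:ℝ)) (Set.mem_univ 1)
    one_pos (hh 0)
  have hc0 : c 0 = x := by simp [hc]
  have hc1 : c 1 = y := by simp [hc]
  rw [slope_def_field, hc0, hc1] at hslope
  simp only [sub_zero, div_one] at hslope
  linarith

/-- descent lemma for L-Lipschitz gradients -/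
lemma my_descent_lemma {f : E → ℝ} {g : E → E} {L : ℝ}
    (hgrad : ∀ x, HasGradientAt f (g x) x) (hL : 0 < L)
    (hlip : ∀ a b, ‖g a - g b‖ ≤ L * ‖a - b‖) (hgc : Continuous g)
    (a b : E) : f b ≤ f a + ⟪g a, b - a⟫_ℝ + L / 2 * ‖b - a‖ ^ 2 := by
  set c : ℝ → E := fun τ => a + τ • (b - a) with hc
  have hcd : ∀ τ : ℝ, HasDerivAt c (b - a) τ := fun τ => by
    simpa [hc] using ((hasDerivAt_id τ).smul_const (b - a)).const_add a
  have hh : ∀ τ : ℝ, HasDerivAt (fun τ => f (c τ)) ⟪g (c τ), b - a⟫_ℝ τ := fun τ => by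
    simpa [InnerProductSpace.toDual_apply_apply, Function.comp_def] using
      ((hgrad (c τ)).hasFDerivAt.comp_hasDerivAt τ (hcd τ))
  have hcc : Continuous c := by
    apply continuous_const.add (continuous_id.smul continuous_const)
  have hcont : Continuous fun τ : ℝ => ⟪g (c τ), b - a⟫_ℝ :=
    (hgc.comp hcc).inner continuous_const
  have hint : f (c 1) - f (c 0) = ∫ τ in (0:ℝ)..1, ⟪g (c τ), b - a⟫_ℝ :=
    (intervalIntegral.integral_eq_sub_of_hasDerivAt (fun τ _ => hh τ)
      (hcont.intervalIntegrable 0 1)).symm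
  have hboundc : Continuous fun τ : ℝ => ⟪g a, b - a⟫_ℝ + L * ‖b - a‖ ^ 2 * τ := by
    continuity
  have hbound : ∀ τ ∈ Set.Icc (0:ℝ) 1,
      ⟪g (c τ), b - a⟫_ℝ ≤ ⟪g a, b - a⟫_ℝ + L * ‖b - a‖ ^ 2 * τ := by
    intro τ hτ
    have h1 : ⟪g (c τ) - g a, b - a⟫_ℝ ≤ ‖g (c τ) - g a‖ * ‖b - a‖ := real_inner_le_norm _ _
    have h2 : ‖g (c τ) - g a‖ ≤ L * ‖c τ - a‖ := hlip _ _
    have h3 : ‖c τ - a‖ = τ * ‖b - a‖ := by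
      simp [hc, norm_smul, abs_of_nonneg hτ.1]
    have h4 : ⟪g (c τ), b - a⟫_ℝ = ⟪g a, b - a⟫_ℝ + ⟪g (c τ) - g a, b - a⟫_ℝ := by
      rw [inner_sub_left]; ring
    have h5 : ‖g (c τ) - g a‖ * ‖b - a‖ ≤ L * (τ * ‖b - a‖) * ‖b - a‖ := by
      rw [← h3]; exact mul_le_mul_of_nonneg_right h2 (norm_nonneg _)
    have h6 : L * (τ * ‖b - a‖) * ‖b - a‖ = L * ‖b - a‖ ^ 2 * τ := by ring
    linarith
  have hmono := intervalIntegral.integral_mono_on (μ := MeasureTheory.volume) (by norm_num : (0:ℝ) ≤ 1)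
    (hcont.intervalIntegrable 0 1) (hboundc.intervalIntegrable 0 1) hbound
  have hval : (∫ τ in (0:ℝ)..1, (⟪g a, b - a⟫_ℝ + L * ‖b - a‖ ^ 2 * τ))
      = ⟪g a, b - a⟫_ℝ + L / 2 * ‖b - a‖ ^ 2 := by
    rw [intervalIntegral.integral_add
      ((continuous_const : Continuous fun _ : ℝ => ⟪g a, b - a⟫_ℝ).intervalIntegrable 0 1)
      ((show Continuous fun τ : ℝ => L * ‖b - a‖ ^ 2 * τ from continuous_const.mul continuous_id).intervalIntegrable 0 1)]
    rw [intervalIntegral.integral_const, intervalIntegral.integral_const_mul,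
      integral_id]
    norm_num
    ring
  have hc0 : c 0 = a := by simp [hc]
  have hc1 : c 1 = b := by simp [hc]
  rw [hc0, hc1] at hint
  rw [hval] at hmono
  linarith

/-- strong convexity-smoothness inequality -/
lemma my_strong_grad_ineq {f : E → ℝ} {g : E → E} {L : ℝ}
    (hgrad : ∀ x, HasGradientAt f (g x) x) (hconv : ConvexOn ℝ Set.univ f)
    (hL : 0 < L) (hlip : ∀ a b, ‖g a - g b‖ ≤ L * ‖a - b‖) (hgc : Continuous g)
    (x y : E) : f x + ⟪g x, y - x⟫_ℝ + 1 / (2 * L) * ‖g y - g x‖ ^ 2 ≤ f y := by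
  set d : E := g y - g x with hd
  set w : E := y - (1 / L) • d with hw
  have hA := my_grad_convex_ineq hgrad hconv x w
  have hB := my_descent_lemma hgrad hL hlip hgc y w
  have e1 : w - x = (y - x) - (1 / L) • d := by rw [hw]; abel
  have e2 : w - y = -((1 / L) • d) := by rw [hw]; abel
  have i1 : ⟪g x, w - x⟫_ℝ = ⟪g x, y - x⟫_ℝ - (1 / L) * ⟪g x, d⟫_ℝ := by
    rw [e1, inner_sub_right, real_inner_smul_right]
  have i2 : ⟪g y, w - y⟫_ℝ = -((1 / L) * ⟪g y, d⟫_ℝ) := by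
    rw [e2, inner_neg_right, real_inner_smul_right]
  have i3 : ‖w - y‖ ^ 2 = (1 / L) ^ 2 * ‖d‖ ^ 2 := by
    rw [e2, norm_neg, norm_smul, mul_pow]
    congr 1
    rw [Real.norm_eq_abs, sq_abs]
  have i4 : ⟪g y, d⟫_ℝ - ⟪g x, d⟫_ℝ = ‖d‖ ^ 2 := by
    rw [← inner_sub_left, ← hd, real_inner_self_eq_norm_sq]
  rw [i1] at hA
  rw [i2, i3] at hB
  have hL' : L ≠ 0 := ne_of_gt hL
  have key : f x + ⟪g x, y - x⟫_ℝ + 1 / (2 * L) * ‖d‖ ^ 2 ≤ f y := by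
    have expand : L / 2 * ((1 / L) ^ 2 * ‖d‖ ^ 2) = 1 / (2 * L) * ‖d‖ ^ 2 := by
      field_simp
    have i5 : 1 / L * ⟪g y, d⟫_ℝ - 1 / L * ⟪g x, d⟫_ℝ = 1 / L * ‖d‖ ^ 2 := by
      rw [← mul_sub, i4]
    have i6 : 1 / L * ‖d‖ ^ 2 = 2 * (1 / (2 * L) * ‖d‖ ^ 2) := by
      field_simp
    linarith [hA, hB, i5, i6, expand]
  exact key

/-- Continuous Lyapunov decrease for the high-resolution ODE of NAG-C. -/
theorem nag_c_ode_lyapunov_decrease {n : ℕ}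
    (f : EuclideanSpace ℝ (Fin n) → ℝ)
    (g : EuclideanSpace ℝ (Fin n) → EuclideanSpace ℝ (Fin n))
    (H : EuclideanSpace ℝ (Fin n) → EuclideanSpace ℝ (Fin n) →L[ℝ] EuclideanSpace ℝ (Fin n))
    (L s : ℝ) (hL : 0 < L) (hs : 0 < s)
    (hgrad : ∀ x, HasGradientAt f (g x) x)
    (hhess : ∀ x, HasFDerivAt g (H x) x)
    (hconv : ConvexOn ℝ Set.univ f)
    (hlip : ∀ a b, ‖g a - g b‖ ≤ L * ‖a - b‖)
    (xstar : EuclideanSpace ℝ (Fin n)) (hmin : ∀ z, f xstar ≤ f z)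
    (X X' X'' : ℝ → EuclideanSpace ℝ (Fin n))
    (hX' : ∀ t, HasDerivAt X (X' t) t)
    (hX'' : ∀ t, HasDerivAt X' (X'' t) t)
    (hode : ∀ t, (3/2) * Real.sqrt s ≤ t →
      X'' t + (3 / t) • X' t + Real.sqrt s • (H (X t)) (X' t)
        + (1 + 3 * Real.sqrt s / (2 * t)) • g (X t) = 0) :
    ∀ t, (3/2) * Real.sqrt s ≤ t →
      deriv (fun u => u * (u + Real.sqrt s / 2) * (f (X u) - f xstar)
          + (1/2) * ‖u • X' u + (2 : ℝ) • (X u - xstar) + (u * Real.sqrt s) • g (X u)‖ ^ 2) t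
        ≤ -(Real.sqrt s * t ^ 2 + (1 / L + s / 2) * t + Real.sqrt s / (2 * L))
            * ‖g (X t)‖ ^ 2 := by
  intro t ht
  set r : ℝ := Real.sqrt s with hr
  have hr0 : 0 < r := Real.sqrt_pos.2 hs
  have hrr : r * r = s := Real.mul_self_sqrt hs.le
  have ht0 : 0 < t := lt_of_lt_of_le (by positivity) ht
  -- continuity of g
  have hgc : Continuous g := continuous_iff_continuousAt.2 fun x => (hhess x).continuousAt
  -- gradient vanishes at the minimizer
  have hg0 : g xstar = 0 := by
    have hloc : IsLocalMin f xstar := Filter.Eventually.of_forall fun z => hmin z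
    have h0 := hloc.hasFDerivAt_eq_zero (hgrad xstar).hasFDerivAt
    have h1 : ⟪g xstar, g xstar⟫_ℝ = 0 := by
      rw [← InnerProductSpace.toDual_apply_apply, h0]; rfl
    exact inner_self_eq_zero.1 h1
  -- key inequality
  have hK : f (X t) - f xstar + 1 / (2 * L) * ‖g (X t)‖ ^ 2
      ≤ ⟪g (X t), X t - xstar⟫_ℝ := by
    have := my_strong_grad_ineq hgrad hconv hL hlip hgc (X t) xstar
    rw [hg0, zero_sub, norm_neg] at this
    have hswap : ⟪g (X t), xstar - X t⟫_ℝ = -⟪g (X t), X t - xstar⟫_ℝ := by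
      rw [show xstar - X t = -(X t - xstar) by abel, inner_neg_right]
    rw [hswap] at this
    linarith
  have hF0 : 0 ≤ f (X t) - f xstar := sub_nonneg.2 (hmin (X t))
  -- derivative of the first summand
  have hp : HasDerivAt (fun u : ℝ => u * (u + r / 2)) (2 * t + r / 2) t := by
    have := (hasDerivAt_id t).mul ((hasDerivAt_id t).add_const (r / 2))
    simpa [Pi.mul_def] using this.congr_deriv (by simp; ring)
  have hq : HasDerivAt (fun u => f (X u) - f xstar) ⟪g (X t), X' t⟫_ℝ t := by
    have h1 := (hgrad (X t)).hasFDerivAt.comp_hasDerivAt t (hX' t)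
    simpa [InnerProductSpace.toDual_apply_apply, Function.comp_def] using h1.sub_const (f xstar)
  have hA := hp.mul hq
  -- derivative of v
  have hgX : HasDerivAt (fun u => g (X u)) ((H (X t)) (X' t)) t :=
    (hhess (X t)).comp_hasDerivAt t (hX' t)
  have hv1 : HasDerivAt (fun u : ℝ => u • X' u) (t • X'' t + X' t) t := by
    have := (hasDerivAt_id t).smul (hX'' t)
    simpa [Pi.smul_def'] using this
  have hv2 : HasDerivAt (fun u => (2 : ℝ) • (X u - xstar)) ((2 : ℝ) • X' t) t :=
    ((hX' t).sub_const xstar).const_smul (2 : ℝ)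
  have hv3 : HasDerivAt (fun u : ℝ => (u * r) • g (X u))
      ((t * r) • (H (X t)) (X' t) + r • g (X t)) t := by
    have hc : HasDerivAt (fun u : ℝ => u * r) r t := by
      simpa using (hasDerivAt_id t).mul_const r
    exact hc.smul hgX
  have hv : HasDerivAt (fun u : ℝ => u • X' u + (2 : ℝ) • (X u - xstar) + (u * r) • g (X u))
      ((t • X'' t + X' t) + (2 : ℝ) • X' t + ((t * r) • (H (X t)) (X' t) + r • g (X t))) t :=
    (hv1.add hv2).add hv3
  -- simplify V using the ODE
  have hVeq : (t • X'' t + X' t) + (2 : ℝ) • X' t + ((t * r) • (H (X t)) (X' t) + r • g (X t))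
      = -((t + r / 2) • g (X t)) := by
    have hode' := hode t ht
    have h2 : (t • X'' t + X' t) + (2 : ℝ) • X' t + ((t * r) • (H (X t)) (X' t) + r • g (X t))
        + (t + r / 2) • g (X t)
        = t • (X'' t + (3 / t) • X' t + r • (H (X t)) (X' t)
            + (1 + 3 * r / (2 * t)) • g (X t)) := by
      match_scalars <;> field_simp <;> ring
    have h3 : (t • X'' t + X' t) + (2 : ℝ) • X' t + ((t * r) • (H (X t)) (X' t) + r • g (X t))
        + (t + r / 2) • g (X t) = 0 := by
      rw [h2, hode', smul_zero]
    exact eq_neg_of_add_eq_zero_left h3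
  rw [hVeq] at hv
  -- derivative of the norm-squared summand
  have hN : HasDerivAt
      (fun u : ℝ => (1/2 : ℝ) * ‖u • X' u + (2 : ℝ) • (X u - xstar) + (u * r) • g (X u)‖ ^ 2)
      ⟪t • X' t + (2 : ℝ) • (X t - xstar) + (t * r) • g (X t),
        -((t + r / 2) • g (X t))⟫_ℝ t := by
    have h1 := (hv.inner ℝ hv).const_mul (1/2 : ℝ)
    have h2 : (fun u : ℝ => (1/2 : ℝ) * ‖u • X' u + (2 : ℝ) • (X u - xstar)
        + (u * r) • g (X u)‖ ^ 2)
        = fun u : ℝ => (1/2 : ℝ) * ⟪u • X' u + (2 : ℝ) • (X u - xstar) + (u * r) • g (X u),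
            u • X' u + (2 : ℝ) • (X u - xstar) + (u * r) • g (X u)⟫_ℝ := by
      funext u; rw [real_inner_self_eq_norm_sq]
    rw [h2]
    refine h1.congr_deriv ?_
    rw [real_inner_comm (t • X' t + (2 : ℝ) • (X t - xstar) + (t * r) • g (X t))
      (-((t + r / 2) • g (X t)))]
    ring
  -- total derivative
  have hE := hA.add hN
  rw [(show HasDerivAt (fun u : ℝ => u * (u + r / 2) * (f (X u) - f xstar)
      + (1/2) * ‖u • X' u + (2 : ℝ) • (X u - xstar) + (u * r) • g (X u)‖ ^ 2) _ t from hE).deriv]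
  -- expand the inner products
  have hi1 : ⟪t • X' t + (2 : ℝ) • (X t - xstar) + (t * r) • g (X t),
      -((t + r / 2) • g (X t))⟫_ℝ
      = -((t + r / 2) * (t * ⟪g (X t), X' t⟫_ℝ + 2 * ⟪g (X t), X t - xstar⟫_ℝ
          + (t * r) * ‖g (X t)‖ ^ 2)) := by
    rw [inner_neg_right, real_inner_smul_right, inner_add_left, inner_add_left,
      real_inner_smul_left, real_inner_smul_left, real_inner_smul_left,
      real_inner_self_eq_norm_sq, real_inner_comm (X' t), real_inner_comm (X t - xstar)]
  rw [hi1]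
  -- final arithmetic
  have hiL : (1 : ℝ) / (2 * L) = (1 / L) / 2 := by
    rw [one_div, mul_inv, ← one_div]; ring
  have hc0 : (0 : ℝ) ≤ 2 * (t + r / 2) := by positivity
  have hmul := mul_le_mul_of_nonneg_left hK hc0
  have h7 : 2 * (t + r / 2) * (1 / (2 * L)) * ‖g (X t)‖ ^ 2
      = (1 / L) * t * ‖g (X t)‖ ^ 2 + (r / (2 * L)) * ‖g (X t)‖ ^ 2 := by
    field_simp
  have h8 : (t + r / 2) * (t * r) * ‖g (X t)‖ ^ 2
      = (r * t ^ 2 + (s / 2) * t) * ‖g (X t)‖ ^ 2 := by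
    rw [← hrr]; ring
  linarith [hmul, h7, h8, mul_nonneg (by positivity : (0:ℝ) ≤ r / 2) hF0]
end

section
/- Let f : ℝⁿ → ℝ be μ-strongly convex and L-smooth, 0 < μ ≤ L, s > 0, with minimizer x⋆. Let (x_k, v_k) satisfy the heavy-ball phase-space recursion x_{k+1} = x_k + √s·v_k, v_{k+1} = v_k - (2√(μs)/(1-√(μs)))v_{k+1} - ((1+√(μs))/(1-√(μs)))√s∇f(x_{k+1}). Define E(k) = ((1+√(μs))/(1-√(μs)))(f(x_k) - f(x⋆)) + (1/4)‖v_k‖² + (1/4)‖v_k + (2√μ/(1-√(μs)))(x_{k+1} - x⋆)‖². Then for all k ≥ 0, E(k+1) - E(k) ≤ -√(μs)·min{(1-√(μs))/(1+√(μs)), 1/4}·E(k+1) - [(3√(μs)/4)·((1+√(μs))/(1-√(μs)))(f(x_{k+1}) - f(x⋆)) - (s/2)((1+√(μs))/(1-√(μs)))²‖∇f(x_{k+1})‖²]. -/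
open scoped RealInnerProductSpace

set_option maxHeartbeats 4000000

private lemma normsq3 {n : ℕ} (α β γ : ℝ) (u v w : EuclideanSpace ℝ (Fin n)) :
    ‖α•u + β•v + γ•w‖^2 = α^2*‖u‖^2 + β^2*‖v‖^2 + γ^2*‖w‖^2
      + 2*(α*β)*⟪u,v⟫ + 2*(α*γ)*⟪u,w⟫ + 2*(β*γ)*⟪v,w⟫ := by
  rw [← real_inner_self_eq_norm_sq, ← real_inner_self_eq_norm_sq,
      ← real_inner_self_eq_norm_sq, ← real_inner_self_eq_norm_sq]
  simp only [inner_add_left, inner_add_right, real_inner_smul_left, real_inner_smul_right,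
    real_inner_comm v u, real_inner_comm w u, real_inner_comm w v]
  ring

private lemma normsq3_nonneg {n : ℕ} (α β γ : ℝ) (u v w : EuclideanSpace ℝ (Fin n)) :
    0 ≤ α^2*‖u‖^2 + β^2*‖v‖^2 + γ^2*‖w‖^2
      + 2*(α*β)*⟪u,v⟫ + 2*(α*γ)*⟪u,w⟫ + 2*(β*γ)*⟪v,w⟫ := by
  rw [← normsq3]; positivity

private lemma keyA (a t G V D p q w F1 Fk1 : ℝ) (ha : 0 < a) (ha1 : a < 1) (ht : 0 < t)
    (hA : a ≤ 3/5)
    (hC1 : F1 - Fk1 ≤ t*p - a^2/2*V)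
    (hC2 : F1 + a^2/(2*t^2)*D ≤ q)
    (hF : 0 ≤ F1) (hD : 0 ≤ D)
    (hS1 : 0 ≤ (a*t^2*(7-a^2)*(1+a))^2*G + (-(a*t*(7-a^2)*(1-a)))^2*V + (a^2*(1+5*a)*(1+a))^2*D
      + 2*((a*t^2*(7-a^2)*(1+a))*(-(a*t*(7-a^2)*(1-a))))*p
      + 2*((a*t^2*(7-a^2)*(1+a))*(a^2*(1+5*a)*(1+a)))*q
      + 2*((-(a*t*(7-a^2)*(1-a)))*(a^2*(1+5*a)*(1+a)))*w)
    (hS2 : 0 ≤ (0:ℝ)^2*G + (a^3*(1+a)^2*(7-a^2)*t^2)^2*V + (a^4*t*(7-a^2))^2*D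
      + 2*((0:ℝ)*(a^3*(1+a)^2*(7-a^2)*t^2))*p
      + 2*((0:ℝ)*(a^4*t*(7-a^2)))*q
      + 2*((a^3*(1+a)^2*(7-a^2)*t^2)*(a^4*t*(7-a^2)))*w) :
    0 ≤ (-(a) * (1/4) *
          (((1+a)/(1-a))*F1
            + 1/4*(t^2*G + ((1-a)/(1+a))^2*V + 2*((-t)*((1-a)/(1+a)))*p)
            + 1/4*((((1+a)/(1-a))*t)^2*G + V + (2*(a/t)/(1-a))^2*D
                + 2*((-(((1+a)/(1-a))*t))*1)*p + 2*((-(((1+a)/(1-a))*t))*(2*(a/t)/(1-a)))*q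
                + 2*(1*(2*(a/t)/(1-a)))*w))
        - ((3*a/4)*((1+a)/(1-a))*F1 - t^2/2*((1+a)/(1-a))^2*G))
      - ((((1+a)/(1-a))*F1
            + 1/4*(t^2*G + ((1-a)/(1+a))^2*V + 2*((-t)*((1-a)/(1+a)))*p)
            + 1/4*((((1+a)/(1-a))*t)^2*G + V + (2*(a/t)/(1-a))^2*D
                + 2*((-(((1+a)/(1-a))*t))*1)*p + 2*((-(((1+a)/(1-a))*t))*(2*(a/t)/(1-a)))*q
                + 2*(1*(2*(a/t)/(1-a)))*w))
          - (((1+a)/(1-a))*Fk1 + 1/4*V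
            + 1/4*(V + (2*(a/t)/(1-a))^2*D + 2*(1*(2*(a/t)/(1-a)))*w))) := by
  have h1a : (0:ℝ) < 1 - a := by linarith
  have h1a' : (0:ℝ) < 1 + a := by linarith
  have h7 : (0:ℝ) < 7 - a^2 := by nlinarith
  have hPA : (0:ℝ) ≤ 13+29*a+66*a^2-98*a^3-159*a^4-55*a^5+8*a^6+4*a^7 := by
    have e1 : a^3 ≤ (3/5)*a^2 := by nlinarith
    have e2 : a^4 ≤ (9/25)*a^2 := by nlinarith [sq_nonneg a]
    have e3 : a^5 ≤ (27/125)*a^2 := by nlinarith [sq_nonneg a, pow_nonneg ha.le 3]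
    have e4 : (0:ℝ) ≤ a^6 := by positivity
    have e5 : (0:ℝ) ≤ a^7 := by positivity
    have e6 : a^2 ≤ (3/5)*a := by nlinarith
    linarith
  have hA1 : 0 ≤ ((1+a)/(1-a)) * (t*p - a^2/2*V - F1 + Fk1) :=
    mul_nonneg (by positivity) (by linarith)
  have hA2 : 0 ≤ (a*(1+a-a^2)/(1-a)^2) * (q - F1 - a^2/(2*t^2)*D) := by
    refine mul_nonneg (div_nonneg (by nlinarith) (by positivity)) (by linarith)
  have hA3 : 0 ≤ (a^2/(1-a)^2) * F1 := mul_nonneg (by positivity) hF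
  have hA4 : 0 ≤ (1/(8*a*t^2*(7-a^2)*(1-a)^2*(1+a)^2)) *
      ((a*t^2*(7-a^2)*(1+a))^2*G + (-(a*t*(7-a^2)*(1-a)))^2*V + (a^2*(1+5*a)*(1+a))^2*D
      + 2*((a*t^2*(7-a^2)*(1+a))*(-(a*t*(7-a^2)*(1-a))))*p
      + 2*((a*t^2*(7-a^2)*(1+a))*(a^2*(1+5*a)*(1+a)))*q
      + 2*((-(a*t*(7-a^2)*(1-a)))*(a^2*(1+5*a)*(1+a)))*w) := by
    refine mul_nonneg (one_div_nonneg.mpr ?_) hS1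
    have : (0:ℝ) < 8*a*t^2*(7-a^2)*(1-a)^2*(1+a)^2 := by
      apply mul_pos; apply mul_pos; apply mul_pos; apply mul_pos
      all_goals positivity
    linarith
  have hA5 : 0 ≤ (1/(2*a^4*t^4*(7-a^2)^2*(1-a)*(1+a)^3)) *
      ((0:ℝ)^2*G + (a^3*(1+a)^2*(7-a^2)*t^2)^2*V + (a^4*t*(7-a^2))^2*D
      + 2*((0:ℝ)*(a^3*(1+a)^2*(7-a^2)*t^2))*p
      + 2*((0:ℝ)*(a^4*t*(7-a^2)))*q
      + 2*((a^3*(1+a)^2*(7-a^2)*t^2)*(a^4*t*(7-a^2)))*w) := by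
    refine mul_nonneg (one_div_nonneg.mpr ?_) hS2
    have h2 : (0:ℝ) < (7-a^2)^2 := by positivity
    have : (0:ℝ) < 2*a^4*t^4*(7-a^2)^2*(1-a)*(1+a)^3 := by
      apply mul_pos; apply mul_pos; apply mul_pos; apply mul_pos
      all_goals positivity
    linarith
  have hA6 : 0 ≤ (a^3*(13+29*a+66*a^2-98*a^3-159*a^4-55*a^5+8*a^6+4*a^7)
        /(8*(1-a)^2*(1+a)^3*(7-a^2)*t^2)) * D := by
    refine mul_nonneg (div_nonneg ?_ ?_) hD
    · exact mul_nonneg (by positivity) hPA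
    · have : (0:ℝ) < 8*(1-a)^2*(1+a)^3*(7-a^2)*t^2 := by
        apply mul_pos; apply mul_pos; apply mul_pos
        all_goals positivity
      linarith
  have h1an : (1:ℝ) - a ≠ 0 := ne_of_gt h1a
  have h1an' : (1:ℝ) + a ≠ 0 := ne_of_gt h1a'
  have h7n : (7:ℝ) - a^2 ≠ 0 := ne_of_gt h7
  have htn : t ≠ 0 := ne_of_gt ht
  have han : a ≠ 0 := ne_of_gt ha
  have hid : (-(a) * (1/4) *
          (((1+a)/(1-a))*F1
            + 1/4*(t^2*G + ((1-a)/(1+a))^2*V + 2*((-t)*((1-a)/(1+a)))*p)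
            + 1/4*((((1+a)/(1-a))*t)^2*G + V + (2*(a/t)/(1-a))^2*D
                + 2*((-(((1+a)/(1-a))*t))*1)*p + 2*((-(((1+a)/(1-a))*t))*(2*(a/t)/(1-a)))*q
                + 2*(1*(2*(a/t)/(1-a)))*w))
        - ((3*a/4)*((1+a)/(1-a))*F1 - t^2/2*((1+a)/(1-a))^2*G))
      - ((((1+a)/(1-a))*F1
            + 1/4*(t^2*G + ((1-a)/(1+a))^2*V + 2*((-t)*((1-a)/(1+a)))*p)
            + 1/4*((((1+a)/(1-a))*t)^2*G + V + (2*(a/t)/(1-a))^2*D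
                + 2*((-(((1+a)/(1-a))*t))*1)*p + 2*((-(((1+a)/(1-a))*t))*(2*(a/t)/(1-a)))*q
                + 2*(1*(2*(a/t)/(1-a)))*w))
          - (((1+a)/(1-a))*Fk1 + 1/4*V
            + 1/4*(V + (2*(a/t)/(1-a))^2*D + 2*(1*(2*(a/t)/(1-a)))*w)))
      = ((1+a)/(1-a)) * (t*p - a^2/2*V - F1 + Fk1)
      + (a*(1+a-a^2)/(1-a)^2) * (q - F1 - a^2/(2*t^2)*D)
      + (a^2/(1-a)^2) * F1
      + (1/(8*a*t^2*(7-a^2)*(1-a)^2*(1+a)^2)) *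
        ((a*t^2*(7-a^2)*(1+a))^2*G + (-(a*t*(7-a^2)*(1-a)))^2*V + (a^2*(1+5*a)*(1+a))^2*D
          + 2*((a*t^2*(7-a^2)*(1+a))*(-(a*t*(7-a^2)*(1-a))))*p
          + 2*((a*t^2*(7-a^2)*(1+a))*(a^2*(1+5*a)*(1+a)))*q
          + 2*((-(a*t*(7-a^2)*(1-a)))*(a^2*(1+5*a)*(1+a)))*w)
      + (1/(2*a^4*t^4*(7-a^2)^2*(1-a)*(1+a)^3)) *
        ((0:ℝ)^2*G + (a^3*(1+a)^2*(7-a^2)*t^2)^2*V + (a^4*t*(7-a^2))^2*D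
          + 2*((0:ℝ)*(a^3*(1+a)^2*(7-a^2)*t^2))*p
          + 2*((0:ℝ)*(a^4*t*(7-a^2)))*q
          + 2*((a^3*(1+a)^2*(7-a^2)*t^2)*(a^4*t*(7-a^2)))*w)
      + (a^3*(13+29*a+66*a^2-98*a^3-159*a^4-55*a^5+8*a^6+4*a^7)
          /(8*(1-a)^2*(1+a)^3*(7-a^2)*t^2)) * D := by
    field_simp
    ring
  rw [hid]
  linarith

private lemma keyB (a t G V D p q w F1 Fk1 : ℝ) (ha : 0 < a) (ha1 : a < 1) (ht : 0 < t)
    (hB : 3/5 ≤ a)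
    (hC1 : F1 - Fk1 ≤ t*p - a^2/2*V)
    (hC2 : F1 + a^2/(2*t^2)*D ≤ q)
    (hF : 0 ≤ F1) (hD : 0 ≤ D)
    (hS1 : 0 ≤ (4*a*t^2*(1+3*a-a^2+a^3)*(1+a))^2*G + (-(4*a*t*(1+3*a-a^2+a^3)*(1-a)))^2*V
      + (-(a*(3-12*a+5*a^2)*(1+a)^2))^2*D
      + 2*((4*a*t^2*(1+3*a-a^2+a^3)*(1+a))*(-(4*a*t*(1+3*a-a^2+a^3)*(1-a))))*p
      + 2*((4*a*t^2*(1+3*a-a^2+a^3)*(1+a))*(-(a*(3-12*a+5*a^2)*(1+a)^2)))*q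
      + 2*((-(4*a*t*(1+3*a-a^2+a^3)*(1-a)))*(-(a*(3-12*a+5*a^2)*(1+a)^2)))*w)
    (hS2 : 0 ≤ (0:ℝ)^2*G + (4*a^3*(1+3*a-a^2+a^3)*t^2*(1+a)^2)^2*V
      + (a^2*t*(-3-a+26*a^2-14*a^3+9*a^4-a^5))^2*D
      + 2*((0:ℝ)*(4*a^3*(1+3*a-a^2+a^3)*t^2*(1+a)^2))*p
      + 2*((0:ℝ)*(a^2*t*(-3-a+26*a^2-14*a^3+9*a^4-a^5)))*q
      + 2*((4*a^3*(1+3*a-a^2+a^3)*t^2*(1+a)^2)*(a^2*t*(-3-a+26*a^2-14*a^3+9*a^4-a^5)))*w) :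
    0 ≤ (-(a) * ((1-a)/(1+a)) *
          (((1+a)/(1-a))*F1
            + 1/4*(t^2*G + ((1-a)/(1+a))^2*V + 2*((-t)*((1-a)/(1+a)))*p)
            + 1/4*((((1+a)/(1-a))*t)^2*G + V + (2*(a/t)/(1-a))^2*D
                + 2*((-(((1+a)/(1-a))*t))*1)*p + 2*((-(((1+a)/(1-a))*t))*(2*(a/t)/(1-a)))*q
                + 2*(1*(2*(a/t)/(1-a)))*w))
        - ((3*a/4)*((1+a)/(1-a))*F1 - t^2/2*((1+a)/(1-a))^2*G))
      - ((((1+a)/(1-a))*F1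
            + 1/4*(t^2*G + ((1-a)/(1+a))^2*V + 2*((-t)*((1-a)/(1+a)))*p)
            + 1/4*((((1+a)/(1-a))*t)^2*G + V + (2*(a/t)/(1-a))^2*D
                + 2*((-(((1+a)/(1-a))*t))*1)*p + 2*((-(((1+a)/(1-a))*t))*(2*(a/t)/(1-a)))*q
                + 2*(1*(2*(a/t)/(1-a)))*w))
          - (((1+a)/(1-a))*Fk1 + 1/4*V
            + 1/4*(V + (2*(a/t)/(1-a))^2*D + 2*(1*(2*(a/t)/(1-a)))*w))) := by
  have h1a : (0:ℝ) < 1 - a := by linarith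
  have h1a' : (0:ℝ) < 1 + a := by linarith
  have hQ : (0:ℝ) < 1+3*a-a^2+a^3 := by nlinarith
  have hb : (0:ℝ) ≤ a - 3/5 := by linarith
  have hPB : (0:ℝ) ≤ -9+21*a+98*a^2-278*a^3+260*a^4-380*a^5+302*a^6+170*a^7+61*a^8+15*a^9
      -8*a^10+4*a^11 := by
    have p2 := pow_nonneg hb 2
    have p3 := pow_nonneg hb 3
    have p4 := pow_nonneg hb 4
    have p5 := pow_nonneg hb 5
    have p6 := pow_nonneg hb 6
    have p7 := pow_nonneg hb 7
    have p8 := pow_nonneg hb 8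
    have p9 := pow_nonneg hb 9
    have p10 := pow_nonneg hb 10
    have p11 := pow_nonneg hb 11
    linarith
  have hA1 : 0 ≤ ((1+a)/(1-a)) * (t*p - a^2/2*V - F1 + Fk1) :=
    mul_nonneg (by positivity) (by linarith)
  have hA2 : 0 ≤ (a*(7-4*a+a^2)/(4*(1-a)^2)) * (q - F1 - a^2/(2*t^2)*D) := by
    refine mul_nonneg (div_nonneg (by nlinarith) (by positivity)) (by linarith)
  have hA3 : 0 ≤ (a^2/(1-a)^2) * F1 := mul_nonneg (by positivity) hF
  have hA4 : 0 ≤ (1/(32*a*t^2*(1+3*a-a^2+a^3)*(1-a)^2*(1+a)^3)) *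
      ((4*a*t^2*(1+3*a-a^2+a^3)*(1+a))^2*G + (-(4*a*t*(1+3*a-a^2+a^3)*(1-a)))^2*V
      + (-(a*(3-12*a+5*a^2)*(1+a)^2))^2*D
      + 2*((4*a*t^2*(1+3*a-a^2+a^3)*(1+a))*(-(4*a*t*(1+3*a-a^2+a^3)*(1-a))))*p
      + 2*((4*a*t^2*(1+3*a-a^2+a^3)*(1+a))*(-(a*(3-12*a+5*a^2)*(1+a)^2)))*q
      + 2*((-(4*a*t*(1+3*a-a^2+a^3)*(1-a)))*(-(a*(3-12*a+5*a^2)*(1+a)^2)))*w) := by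
    refine mul_nonneg (one_div_nonneg.mpr ?_) hS1
    have : (0:ℝ) < 32*a*t^2*(1+3*a-a^2+a^3)*(1-a)^2*(1+a)^3 := by
      apply mul_pos; apply mul_pos; apply mul_pos; apply mul_pos
      all_goals positivity
    linarith
  have hA5 : 0 ≤ (1/(32*a^4*t^4*(1+3*a-a^2+a^3)^2*(1-a)*(1+a)^3)) *
      ((0:ℝ)^2*G + (4*a^3*(1+3*a-a^2+a^3)*t^2*(1+a)^2)^2*V
      + (a^2*t*(-3-a+26*a^2-14*a^3+9*a^4-a^5))^2*D
      + 2*((0:ℝ)*(4*a^3*(1+3*a-a^2+a^3)*t^2*(1+a)^2))*p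
      + 2*((0:ℝ)*(a^2*t*(-3-a+26*a^2-14*a^3+9*a^4-a^5)))*q
      + 2*((4*a^3*(1+3*a-a^2+a^3)*t^2*(1+a)^2)*(a^2*t*(-3-a+26*a^2-14*a^3+9*a^4-a^5)))*w) := by
    refine mul_nonneg (one_div_nonneg.mpr ?_) hS2
    have h2 : (0:ℝ) < (1+3*a-a^2+a^3)^2 := by positivity
    have : (0:ℝ) < 32*a^4*t^4*(1+3*a-a^2+a^3)^2*(1-a)*(1+a)^3 := by
      apply mul_pos; apply mul_pos; apply mul_pos; apply mul_pos
      all_goals positivity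
    linarith
  have hA6 : 0 ≤ ((-9+21*a+98*a^2-278*a^3+260*a^4-380*a^5+302*a^6+170*a^7+61*a^8+15*a^9
        -8*a^10+4*a^11)/(32*(1-a)^2*(1+a)^3*(1+3*a-a^2+a^3)*t^2)) * D := by
    refine mul_nonneg (div_nonneg hPB ?_) hD
    have : (0:ℝ) < 32*(1-a)^2*(1+a)^3*(1+3*a-a^2+a^3)*t^2 := by
      apply mul_pos; apply mul_pos; apply mul_pos
      all_goals positivity
    linarith
  have h1an : (1:ℝ) - a ≠ 0 := ne_of_gt h1a
  have h1an' : (1:ℝ) + a ≠ 0 := ne_of_gt h1a'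
  have hQn : (1:ℝ)+3*a-a^2+a^3 ≠ 0 := ne_of_gt hQ
  have htn : t ≠ 0 := ne_of_gt ht
  have han : a ≠ 0 := ne_of_gt ha
  have hid : (-(a) * ((1-a)/(1+a)) *
          (((1+a)/(1-a))*F1
            + 1/4*(t^2*G + ((1-a)/(1+a))^2*V + 2*((-t)*((1-a)/(1+a)))*p)
            + 1/4*((((1+a)/(1-a))*t)^2*G + V + (2*(a/t)/(1-a))^2*D
                + 2*((-(((1+a)/(1-a))*t))*1)*p + 2*((-(((1+a)/(1-a))*t))*(2*(a/t)/(1-a)))*q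
                + 2*(1*(2*(a/t)/(1-a)))*w))
        - ((3*a/4)*((1+a)/(1-a))*F1 - t^2/2*((1+a)/(1-a))^2*G))
      - ((((1+a)/(1-a))*F1
            + 1/4*(t^2*G + ((1-a)/(1+a))^2*V + 2*((-t)*((1-a)/(1+a)))*p)
            + 1/4*((((1+a)/(1-a))*t)^2*G + V + (2*(a/t)/(1-a))^2*D
                + 2*((-(((1+a)/(1-a))*t))*1)*p + 2*((-(((1+a)/(1-a))*t))*(2*(a/t)/(1-a)))*q
                + 2*(1*(2*(a/t)/(1-a)))*w))
          - (((1+a)/(1-a))*Fk1 + 1/4*V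
            + 1/4*(V + (2*(a/t)/(1-a))^2*D + 2*(1*(2*(a/t)/(1-a)))*w)))
      = ((1+a)/(1-a)) * (t*p - a^2/2*V - F1 + Fk1)
      + (a*(7-4*a+a^2)/(4*(1-a)^2)) * (q - F1 - a^2/(2*t^2)*D)
      + (a^2/(1-a)^2) * F1
      + (1/(32*a*t^2*(1+3*a-a^2+a^3)*(1-a)^2*(1+a)^3)) *
        ((4*a*t^2*(1+3*a-a^2+a^3)*(1+a))^2*G + (-(4*a*t*(1+3*a-a^2+a^3)*(1-a)))^2*V
          + (-(a*(3-12*a+5*a^2)*(1+a)^2))^2*D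
          + 2*((4*a*t^2*(1+3*a-a^2+a^3)*(1+a))*(-(4*a*t*(1+3*a-a^2+a^3)*(1-a))))*p
          + 2*((4*a*t^2*(1+3*a-a^2+a^3)*(1+a))*(-(a*(3-12*a+5*a^2)*(1+a)^2)))*q
          + 2*((-(4*a*t*(1+3*a-a^2+a^3)*(1-a)))*(-(a*(3-12*a+5*a^2)*(1+a)^2)))*w)
      + (1/(32*a^4*t^4*(1+3*a-a^2+a^3)^2*(1-a)*(1+a)^3)) *
        ((0:ℝ)^2*G + (4*a^3*(1+3*a-a^2+a^3)*t^2*(1+a)^2)^2*V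
          + (a^2*t*(-3-a+26*a^2-14*a^3+9*a^4-a^5))^2*D
          + 2*((0:ℝ)*(4*a^3*(1+3*a-a^2+a^3)*t^2*(1+a)^2))*p
          + 2*((0:ℝ)*(a^2*t*(-3-a+26*a^2-14*a^3+9*a^4-a^5)))*q
          + 2*((4*a^3*(1+3*a-a^2+a^3)*t^2*(1+a)^2)*(a^2*t*(-3-a+26*a^2-14*a^3+9*a^4-a^5)))*w)
      + ((-9+21*a+98*a^2-278*a^3+260*a^4-380*a^5+302*a^6+170*a^7+61*a^8+15*a^9
          -8*a^10+4*a^11)/(32*(1-a)^2*(1+a)^3*(1+3*a-a^2+a^3)*t^2)) * D := by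
    set Q := (1:ℝ)+3*a-a^2+a^3 with hQdef
    field_simp
    rw [hQdef]
    ring
  rw [hid]
  linarith

/-- Discrete Lyapunov decrease lemma for Polyak's heavy-ball method. -/
theorem heavy_ball_lyapunov_decrease {n : ℕ}
    (f : EuclideanSpace ℝ (Fin n) → ℝ)
    (g : EuclideanSpace ℝ (Fin n) → EuclideanSpace ℝ (Fin n))
    (μ L s : ℝ) (hμ : 0 < μ) (hμL : μ ≤ L) (hs : 0 < s)
    (hms : Real.sqrt (μ * s) < 1)
    (hgrad : ∀ x, HasGradientAt f (g x) x)
    (hsconv : ∀ a b, f b ≥ f a + ⟪g a, b - a⟫ + μ / 2 * ‖b - a‖ ^ 2)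
    (hlip : ∀ a b, ‖g a - g b‖ ≤ L * ‖a - b‖)
    (xstar : EuclideanSpace ℝ (Fin n)) (hmin : ∀ z, f xstar ≤ f z)
    (x v : ℕ → EuclideanSpace ℝ (Fin n))
    (hx : ∀ k : ℕ, x (k + 1) = x k + Real.sqrt s • v k)
    (hv : ∀ k : ℕ, v (k + 1) = v k
          - (2 * Real.sqrt (μ * s) / (1 - Real.sqrt (μ * s))) • v (k + 1)
          - (((1 + Real.sqrt (μ * s)) / (1 - Real.sqrt (μ * s))) * Real.sqrt s) • g (x (k + 1))) :
    ∀ k : ℕ,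
      (((1 + Real.sqrt (μ * s)) / (1 - Real.sqrt (μ * s))) * (f (x (k + 1)) - f xstar)
        + (1/4) * ‖v (k + 1)‖ ^ 2
        + (1/4) * ‖v (k + 1)
            + (2 * Real.sqrt μ / (1 - Real.sqrt (μ * s))) • (x (k + 2) - xstar)‖ ^ 2)
      - (((1 + Real.sqrt (μ * s)) / (1 - Real.sqrt (μ * s))) * (f (x k) - f xstar)
        + (1/4) * ‖v k‖ ^ 2
        + (1/4) * ‖v k
            + (2 * Real.sqrt μ / (1 - Real.sqrt (μ * s))) • (x (k + 1) - xstar)‖ ^ 2)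
      ≤ -(Real.sqrt (μ * s)) *
            min ((1 - Real.sqrt (μ * s)) / (1 + Real.sqrt (μ * s))) (1/4) *
            (((1 + Real.sqrt (μ * s)) / (1 - Real.sqrt (μ * s))) * (f (x (k + 1)) - f xstar)
              + (1/4) * ‖v (k + 1)‖ ^ 2
              + (1/4) * ‖v (k + 1)
                  + (2 * Real.sqrt μ / (1 - Real.sqrt (μ * s))) • (x (k + 2) - xstar)‖ ^ 2)
        - ((3 * Real.sqrt (μ * s) / 4) * ((1 + Real.sqrt (μ * s)) / (1 - Real.sqrt (μ * s)))
              * (f (x (k + 1)) - f xstar)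
            - (s / 2) * ((1 + Real.sqrt (μ * s)) / (1 - Real.sqrt (μ * s))) ^ 2
              * ‖g (x (k + 1))‖ ^ 2) := by
  intro k
  have hμs0 : (0:ℝ) < μ * s := mul_pos hμ hs
  set a := Real.sqrt (μ * s) with ha_def
  set t := Real.sqrt s with ht_def
  have ht : 0 < t := Real.sqrt_pos.mpr hs
  have ht2 : t^2 = s := Real.sq_sqrt hs.le
  have ha : 0 < a := Real.sqrt_pos.mpr hμs0
  have ha1 : a < 1 := hms
  have h1a : (0:ℝ) < 1 - a := by linarith
  have h1a' : (0:ℝ) < 1 + a := by linarith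
  have h1an : (1:ℝ) - a ≠ 0 := ne_of_gt h1a
  have h1an' : (1:ℝ) + a ≠ 0 := ne_of_gt h1a'
  have htn : t ≠ 0 := ne_of_gt ht
  have hμt : μ * t^2 = a^2 := by
    rw [ht2, ha_def, Real.sq_sqrt hμs0.le]
  have hμeq : μ = a^2/t^2 := by
    rw [eq_div_iff (by positivity)]; exact hμt
  have hsqμ : Real.sqrt μ = a/t := by
    rw [ha_def, ht_def, Real.sqrt_mul hμ.le, eq_div_iff (ne_of_gt (Real.sqrt_pos.mpr hs))]
  -- solve the velocity recursion
  have hv1 : v (k+1) = ((1-a)/(1+a)) • v k - t • g (x (k+1)) := by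
    have h := hv k
    have key : v (k+1) + (2*a/(1-a)) • v (k+1)
        = v k - (((1+a)/(1-a))*t) • g (x (k+1)) := by
      nth_rewrite 1 [h]; abel
    have key2 : ((1+a)/(1-a)) • v (k+1) = v k - (((1+a)/(1-a))*t) • g (x (k+1)) := by
      have e : ((1+a)/(1-a)) • v (k+1) = v (k+1) + (2*a/(1-a)) • v (k+1) := by
        have e2 : (1+a)/(1-a) = 1 + 2*a/(1-a) := by
          field_simp
          ring
        rw [e2, add_smul, one_smul]
      rw [e]; exact key
    have c1 : ((1-a)/(1+a))*((1+a)/(1-a)) = 1 := by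
      field_simp
    have c2 : ((1-a)/(1+a))*(((1+a)/(1-a))*t) = t := by
      field_simp
      try ring
    calc v (k+1) = (((1-a)/(1+a))*((1+a)/(1-a))) • v (k+1) := by rw [c1, one_smul]
      _ = ((1-a)/(1+a)) • (((1+a)/(1-a)) • v (k+1)) := by rw [← smul_smul]
      _ = ((1-a)/(1+a)) • (v k - (((1+a)/(1-a))*t) • g (x (k+1))) := by rw [key2]
      _ = ((1-a)/(1+a)) • v k - t • g (x (k+1)) := by
            rw [smul_sub, smul_smul, c2]
  have hxk2 : x (k + 2) = x (k+1) + t • v (k+1) := hx (k+1)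
  -- vector decompositions
  have hvec1 : v (k+1) = (-t) • (g (x (k+1))) + ((1-a)/(1+a)) • (v k)
      + (0:ℝ) • (x (k+1) - xstar) := by
    rw [hv1]; module
  have hvec2 : v (k+1) + (2 * Real.sqrt μ / (1 - a)) • (x (k + 2) - xstar)
      = (-(((1+a)/(1-a))*t)) • (g (x (k+1))) + (1:ℝ) • (v k)
      + (2*(a/t)/(1-a)) • (x (k+1) - xstar) := by
    rw [hxk2, hv1, hsqμ]
    match_scalars <;> (field_simp; try ring)
  have hvec3 : v k + (2 * Real.sqrt μ / (1 - a)) • (x (k + 1) - xstar)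
      = (0:ℝ) • (g (x (k+1))) + (1:ℝ) • (v k)
      + (2*(a/t)/(1-a)) • (x (k+1) - xstar) := by
    rw [hsqμ]; module
  -- convexity facts
  have hC1 : f (x (k+1)) - f (x k) ≤ t*⟪g (x (k+1)), v k⟫ - a^2/2*‖v k‖^2 := by
    have h := hsconv (x (k+1)) (x k)
    have hxx : x k - x (k+1) = (-t) • v k := by rw [hx k]; module
    rw [hxx, real_inner_smul_right] at h
    have hnrm : ‖(-t) • v k‖^2 = t^2*‖v k‖^2 := by
      rw [norm_smul, Real.norm_eq_abs, mul_pow, abs_neg, sq_abs]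
    rw [hnrm] at h
    have e : μ/2*(t^2*‖v k‖^2) = a^2/2*‖v k‖^2 := by
      rw [show μ/2*(t^2*‖v k‖^2) = (μ*t^2)/2*‖v k‖^2 by ring, hμt]
    nlinarith [h, e]
  have hC2 : (f (x (k+1)) - f xstar) + a^2/(2*t^2)*‖x (k+1) - xstar‖^2
      ≤ ⟪g (x (k+1)), x (k+1) - xstar⟫ := by
    have h := hsconv (x (k+1)) xstar
    have hxs : xstar - x (k+1) = (-1:ℝ) • (x (k+1) - xstar) := by module
    rw [hxs, real_inner_smul_right] at h
    have hnrm : ‖(-1:ℝ) • (x (k+1) - xstar)‖^2 = ‖x (k+1) - xstar‖^2 := by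
      rw [norm_smul, Real.norm_eq_abs, mul_pow, abs_neg, abs_one]; ring
    rw [hnrm] at h
    have e : μ/2*‖x (k+1) - xstar‖^2 = a^2/(2*t^2)*‖x (k+1) - xstar‖^2 := by
      rw [hμeq]; ring
    nlinarith [h, e]
  have hF : 0 ≤ f (x (k+1)) - f xstar := sub_nonneg.mpr (hmin (x (k+1)))
  have hD : 0 ≤ ‖x (k+1) - xstar‖^2 := by positivity
  rw [← ht2]
  rcases le_total a (3/5) with hcase | hcase
  · -- m = 1/4
    have hminA : min ((1 - a) / (1 + a)) (1/4) = 1/4 := by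
      apply min_eq_right
      rw [le_div_iff₀ h1a']; linarith
    rw [hminA, hvec2, hvec1, hvec3]
    rw [normsq3, normsq3, normsq3, ← sub_nonneg]
    have hkey := keyA a t (‖g (x (k+1))‖^2) (‖v k‖^2) (‖x (k+1) - xstar‖^2)
      (⟪g (x (k+1)), v k⟫) (⟪g (x (k+1)), x (k+1) - xstar⟫) (⟪v k, x (k+1) - xstar⟫)
      (f (x (k+1)) - f xstar) (f (x k) - f xstar)
      ha ha1 ht hcase (by linarith [hC1]) (by linarith [hC2]) hF hD
      (normsq3_nonneg (a*t^2*(7-a^2)*(1+a)) (-(a*t*(7-a^2)*(1-a))) (a^2*(1+5*a)*(1+a))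
        (g (x (k+1))) (v k) (x (k+1) - xstar))
      (normsq3_nonneg 0 (a^3*(1+a)^2*(7-a^2)*t^2) (a^4*t*(7-a^2))
        (g (x (k+1))) (v k) (x (k+1) - xstar))
    linarith [hkey]
  · -- m = (1-a)/(1+a)
    have hminB : min ((1 - a) / (1 + a)) (1/4) = (1 - a) / (1 + a) := by
      apply min_eq_left
      rw [div_le_iff₀ h1a']; linarith
    rw [hminB, hvec2, hvec1, hvec3]
    rw [normsq3, normsq3, normsq3, ← sub_nonneg]
    have hkey := keyB a t (‖g (x (k+1))‖^2) (‖v k‖^2) (‖x (k+1) - xstar‖^2)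
      (⟪g (x (k+1)), v k⟫) (⟪g (x (k+1)), x (k+1) - xstar⟫) (⟪v k, x (k+1) - xstar⟫)
      (f (x (k+1)) - f xstar) (f (x k) - f xstar)
      ha ha1 ht hcase (by linarith [hC1]) (by linarith [hC2]) hF hD
      (normsq3_nonneg (4*a*t^2*(1+3*a-a^2+a^3)*(1+a)) (-(4*a*t*(1+3*a-a^2+a^3)*(1-a)))
        (-(a*(3-12*a+5*a^2)*(1+a)^2)) (g (x (k+1))) (v k) (x (k+1) - xstar))
      (normsq3_nonneg 0 (4*a^3*(1+3*a-a^2+a^3)*t^2*(1+a)^2)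
        (a^2*t*(-3-a+26*a^2-14*a^3+9*a^4-a^5)) (g (x (k+1))) (v k) (x (k+1) - xstar))
    linarith [hkey]
end
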